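/- arXiv:math/0511374 — 9 statements merged into one kernel-verified Lean document; each statement's English description precedes it below -/
import Mathlib

section
/- In the Kiselman semigroup K_n, for any index i and any word w in the generators a_1,...,a_{i-1} (i.e. generators with indices strictly smaller than i), the identity a_i · w · a_i = a_i · w holds. -/
/-- The defining relations of the Kiselman semigroup `K_n`:
`aᵢ² = aᵢ`, and `aᵢaⱼaᵢ = aⱼaᵢaⱼ = aⱼaᵢ` for `i < j`. -/
inductive KisRel (n : ℕ) : FreeMonoid (Fin n) → FreeMonoid (Fin n) → Prop
  | idem (i : Fin n) : KisRel n (.of i * .of i) (.of i)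
  | braid₁ {i j : Fin n} (h : i < j) :
      KisRel n (.of i * .of j * .of i) (.of j * .of i)
  | braid₂ {i j : Fin n} (h : i < j) :
      KisRel n (.of j * .of i * .of j) (.of j * .of i)

/-- The Kiselman semigroup (monoid) `K_n`. -/
abbrev Kiselman (n : ℕ) := PresentedMonoid (KisRel n)

/-- The canonical projection from the free monoid on the generators to `K_n`. -/
def kmk (n : ℕ) : FreeMonoid (Fin n) →* Kiselman n := PresentedMonoid.mk (KisRel n)

/-- The generator `a_{i+1}` (0-indexed: `ka i` is the paper's `a_{i+1}`). -/
def ka {n : ℕ} (i : Fin n) : Kiselman n := PresentedMonoid.of (KisRel n) i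

/-- The idempotent `e_X`: the product of the generators indexed by `X` in strictly
decreasing order of indices. -/
def eX {n : ℕ} (X : Finset (Fin n)) : Kiselman n :=
  kmk n (FreeMonoid.ofList ((X.sort (· ≤ ·)).reverse))

-- The `m` with `x m x = x m` form a submonoid containing `s`.
theorem mul_mul_eq_mul_of_mem_closure {M : Type*} [Monoid M] {x : M} {s : Set M}
    (hx : IsIdempotentElem x) (hs : ∀ y ∈ s, x * y * x = x * y) {m : M}
    (hm : m ∈ Submonoid.closure s) : x * m * x = x * m := by
  induction hm using Submonoid.closure_induction with
  | mem y hy => exact hs y hy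
  | one => simpa using hx.eq
  | mul a b _ _ ha hb =>
    calc x * (a * b) * x = x * a * x * b * x := by rw [ha]; group
      _ = x * a * (x * b * x) := by group
      _ = x * a * b := by rw [hb, ← mul_assoc, ha]
      _ = x * (a * b) := by group

theorem isIdempotentElem_ka {n : ℕ} (i : Fin n) : IsIdempotentElem (ka i) :=
  Quotient.sound (ConGen.Rel.of _ _ (KisRel.idem i))

theorem ka_mul_ka_mul_ka_of_lt {n : ℕ} {i j : Fin n} (h : j < i) :
    ka i * ka j * ka i = ka i * ka j :=
  Quotient.sound (ConGen.Rel.of _ _ (KisRel.braid₂ h))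

theorem kmk_mem_closure_ka {n : ℕ} {s : Set (Fin n)} {w : FreeMonoid (Fin n)}
    (hw : ∀ j ∈ w.toList, j ∈ s) : kmk n w ∈ Submonoid.closure (ka '' s) := by
  induction w using FreeMonoid.inductionOn' with
  | one => exact one_mem _
  | of_mul j w ih =>
    simp only [FreeMonoid.toList_of_mul, List.forall_mem_cons] at hw
    rw [map_mul]
    exact mul_mem (Submonoid.subset_closure ⟨j, hw.1, rfl⟩) (ih hw.2)

/-- Lemma 1(i): for a word `w` in generators with indices `< i`,
`aᵢ w aᵢ = aᵢ w` in `K_n`. -/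
theorem kiselman_left_absorb (n : ℕ) (i : Fin n) (w : FreeMonoid (Fin n))
    (hw : ∀ j ∈ w.toList, j < i) :
    ka i * kmk n w * ka i = ka i * kmk n w := by
  refine mul_mul_eq_mul_of_mem_closure (isIdempotentElem_ka i) ?_ (kmk_mem_closure_ka hw)
  rintro _ ⟨j, hj, rfl⟩
  exact ka_mul_ka_mul_ka_of_lt hj
end

section
/- In the Kiselman semigroup K_n, for any index i and any word w in the generators a_{i+1},...,a_n (i.e. generators with indices strictly larger than i), the identity a_i · w · a_i = w · a_i holds. -/
lemma kmk_rel {n : ℕ} {a b : FreeMonoid (Fin n)} (h : KisRel n a b) :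
    kmk n a = kmk n b :=
  Quotient.sound (ConGen.Rel.of _ _ h)

lemma ka_eq {n : ℕ} (i : Fin n) : ka i = kmk n (.of i) := rfl

lemma kiselman_braid₁ {n : ℕ} {i j : Fin n} (h : i < j) :
    ka i * ka j * ka i = ka j * ka i := by
  rw [ka_eq, ka_eq, ← map_mul, ← map_mul, ← map_mul]
  exact kmk_rel (KisRel.braid₁ h)

theorem kiselman_right_absorb_list (n : ℕ) (i : Fin n) (l : List (Fin n))
    (hw : ∀ j ∈ l, i < j) :
    ka i * kmk n (FreeMonoid.ofList l) * ka i = kmk n (FreeMonoid.ofList l) * ka i := by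
  induction l using List.reverseRecOn with
  | nil =>
    simp only [FreeMonoid.ofList_nil, map_one, mul_one, one_mul]
    rw [ka_eq, ← map_mul]
    exact kmk_rel (KisRel.idem i)
  | append_singleton l j ih =>
    have hj : i < j := hw j (by simp)
    have ihl := ih (fun k hk => hw k (by simp [hk]))
    have h1 : FreeMonoid.ofList (l ++ [j]) = FreeMonoid.ofList l * FreeMonoid.of j := by
      rfl
    rw [h1, map_mul]
    calc ka i * (kmk n (FreeMonoid.ofList l) * kmk n (FreeMonoid.of j)) * ka i
        = ka i * kmk n (FreeMonoid.ofList l) * (ka i * ka j * ka i) := by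
          rw [kiselman_braid₁ hj]; rw [ka_eq j]; group
      _ = (ka i * kmk n (FreeMonoid.ofList l) * ka i) * (ka j * ka i) := by group
      _ = kmk n (FreeMonoid.ofList l) * ka i * (ka j * ka i) := by rw [ihl]
      _ = kmk n (FreeMonoid.ofList l) * (ka i * ka j * ka i) := by group
      _ = kmk n (FreeMonoid.ofList l) * (ka j * ka i) := by rw [kiselman_braid₁ hj]
      _ = kmk n (FreeMonoid.ofList l) * kmk n (FreeMonoid.of j) * ka i := by
          rw [ka_eq j]; group

/-- Lemma 1(ii): for a word `w` in generators with indices `> i`,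
`aᵢ w aᵢ = w aᵢ` in `K_n`. -/
theorem kiselman_right_absorb (n : ℕ) (i : Fin n) (w : FreeMonoid (Fin n))
    (hw : ∀ j ∈ w.toList, i < j) :
    ka i * kmk n w * ka i = kmk n w * ka i := by
  have := kiselman_right_absorb_list n i w.toList hw
  simpa using this
end

section
/- Every element of the Kiselman semigroup K_n distinct from the identity can be represented by a word in the generators of length at most L(n), where L(2k) = 2^{k+1} − 2 and L(2k+1) = 3·2^k − 2. Consequently K_n is finite with |K_n| ≤ 1 + n^{L(n)}. -/
/-- `L(2k) = 2^{k+1} - 2`, `L(2k+1) = 3·2^k - 2`. -/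
def Lbound (n : ℕ) : ℕ := if n % 2 = 0 then 2 ^ (n / 2 + 1) - 2 else 3 * 2 ^ (n / 2) - 2

/-!
The relations give `aᵢ u aᵢ = u aᵢ` when every letter of `u` exceeds `i`, and `aᵢ u aᵢ = aᵢ u`
when every letter of `u` is below `i`. So every word can be shortened until it is reduced: between
two consecutive occurrences of any letter `j` there are both a smaller and a larger letter. In a
reduced word the gaps between consecutive `j`'s are disjoint and each contains a smaller letter,
so `#j ≤ 1 + ∑_{i<j} #i`, whence `#j ≤ 2^j` (letters indexed from `0`); symmetrically
`#j ≤ 2^(n-1-j)`, and `∑_j 2^min(j, n-1-j) = L(n)`. As generators are idempotent, a nonempty word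
can be padded with copies of its first letter to length exactly `L(n)`, which bounds `|K_n|`.
-/

namespace List

variable {α : Type*}

def SeparatedBy (p : α → Prop) (j : α) (w : List α) : Prop :=
  ∀ u, j :: u ++ [j] <:+: w → j ∉ u → ∃ a ∈ u, p a

theorem SeparatedBy.mono {p : α → Prop} {j : α} {v w : List α} (h : SeparatedBy p j w)
    (hvw : v <:+: w) : SeparatedBy p j v :=
  fun u hu => h u (hu.trans hvw)

variable [DecidableEq α]

theorem count_le_one_add_countP_of_separatedBy {p : α → Prop} [DecidablePred p] {j : α}
    {w : List α} (h : SeparatedBy p j w) : w.count j ≤ 1 + w.countP p := by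
  by_cases hjw : j ∈ w
  · obtain ⟨s, t, rfl, hjs⟩ := eq_append_cons_of_mem hjw
    by_cases hjt : j ∈ t
    · obtain ⟨u, r, rfl, hju⟩ := eq_append_cons_of_mem hjt
      obtain ⟨a, hau, hpa⟩ := h u ⟨s, r, by simp⟩ hju
      have hu : 0 < u.countP p := countP_pos_iff.2 ⟨a, hau, by simpa using hpa⟩
      have hr := count_le_one_add_countP_of_separatedBy (w := j :: r)
        (h.mono ⟨s ++ j :: u, [], by simp⟩)
      simp only [count_append, countP_append, count_cons_self, countP_cons,
        count_eq_zero.2 hjs, count_eq_zero.2 hju] at hr ⊢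
      omega
    · simp [count_append, count_eq_zero.2 hjs, count_eq_zero.2 hjt]
  · simp [count_eq_zero.2 hjw]
termination_by w.length
decreasing_by simp_all; omega

theorem sum_count_eq_countP (s : Finset α) (w : List α) :
    ∑ i ∈ s, w.count i = w.countP (· ∈ s) := by
  induction w with
  | nil => simp
  | cons a w ih => simp [count_cons, Finset.sum_add_distrib, ih, countP_cons]

end List

theorem Fin.le_two_pow_of_le_one_add_sum {n : ℕ} {g : Fin n → ℕ}
    (h : ∀ j, g j ≤ 1 + ∑ i ∈ Finset.Iio j, g i) (j : Fin n) : g j ≤ 2 ^ (j : ℕ) := by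
  induction j using WellFoundedLT.induction with
  | _ j ih =>
  calc g j ≤ 1 + ∑ i ∈ Finset.Iio j, g i := h j
    _ ≤ 1 + ∑ i ∈ Finset.Iio j, 2 ^ (i : ℕ) := by
      gcongr with i hi
      exact ih i (Finset.mem_Iio.1 hi)
    _ = 1 + ∑ k ∈ Finset.range j, 2 ^ k := by
      rw [← Nat.Iio_eq_range, ← Fin.map_valEmbedding_Iio, Finset.sum_map]
      rfl
    _ = 2 ^ (j : ℕ) := by
      rw [Nat.geomSum_eq le_rfl, Nat.div_one]
      have := Nat.one_le_two_pow (n := j)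
      omega

theorem Lbound_add_two (m : ℕ) : Lbound (m + 2) = 2 * Lbound m + 2 := by
  have := Nat.one_le_two_pow (n := m / 2)
  simp only [Lbound, Nat.add_mod_right, show (m + 2) / 2 = m / 2 + 1 by omega, pow_succ]
  split_ifs <;> omega

theorem sum_two_pow_min_rev : ∀ n, ∑ j : Fin n, 2 ^ min (j : ℕ) j.rev = Lbound n
  | 0 => rfl
  | 1 => rfl
  | m + 2 => by
    rw [Fin.sum_univ_succ, Fin.sum_univ_castSucc, Lbound_add_two, ← sum_two_pow_min_rev m,
      Finset.mul_sum]
    have first : 2 ^ min ((0 : Fin (m + 2)) : ℕ) (0 : Fin (m + 2)).rev = 1 := by simp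
    have last : 2 ^ min ((Fin.last m).succ : ℕ) (Fin.last m).succ.rev = 1 := by simp
    have middle (j : Fin m) :
        2 ^ min (j.castSucc.succ : ℕ) j.castSucc.succ.rev = 2 * 2 ^ min (j : ℕ) j.rev := by
      rw [← pow_succ']
      simp only [Fin.val_succ, Fin.val_castSucc, Fin.val_rev]
      congr 1
      omega
    simp only [first, last, middle]
    ring

namespace Kiselman

variable {n : ℕ}

def ofList (w : List (Fin n)) : Kiselman n := kmk n (FreeMonoid.ofList w)

@[simp] theorem ofList_nil : ofList ([] : List (Fin n)) = 1 := rfl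

@[simp] theorem ofList_cons (i : Fin n) (w : List (Fin n)) : ofList (i :: w) = ka i * ofList w :=
  rfl

@[simp] theorem ofList_append (v w : List (Fin n)) : ofList (v ++ w) = ofList v * ofList w := by
  simp [ofList]

theorem ofList_append_append_congr {a b : List (Fin n)} (h : ofList a = ofList b)
    (s t : List (Fin n)) : ofList (s ++ a ++ t) = ofList (s ++ b ++ t) := by
  simp only [ofList_append, h]

theorem isIdempotentElem_ka (i : Fin n) : IsIdempotentElem (ka i) :=
  PresentedMonoid.mk_eq_mk_of_rel (KisRel.idem i)

theorem ka_mul_ka_mul_ka_of_lt {i j : Fin n} (h : i < j) : ka i * ka j * ka i = ka j * ka i :=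
  PresentedMonoid.mk_eq_mk_of_rel (KisRel.braid₁ h)

theorem ka_mul_ka_mul_ka_of_gt {i j : Fin n} (h : j < i) : ka i * ka j * ka i = ka i * ka j :=
  PresentedMonoid.mk_eq_mk_of_rel (KisRel.braid₂ h)

theorem ka_mul_ofList_mul_ka_of_lt {i : Fin n} {u : List (Fin n)} (h : ∀ a ∈ u, i < a) :
    ka i * ofList u * ka i = ofList u * ka i := by
  induction u with
  | nil => simpa using (isIdempotentElem_ka i).eq
  | cons j v ih =>
    simp only [List.forall_mem_cons] at h
    have hv : ka i * (ofList v * ka i) = ofList v * ka i := by rw [← mul_assoc, ih h.2]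
    calc ka i * ofList (j :: v) * ka i = ka i * ka j * ka i * (ofList v * ka i) := by
          rw [mul_assoc _ (ka i), hv]; simp [mul_assoc]
      _ = ofList (j :: v) * ka i := by
          rw [ka_mul_ka_mul_ka_of_lt h.1, mul_assoc _ (ka i), hv]; simp [mul_assoc]

theorem ka_mul_ofList_mul_ka_of_gt {i : Fin n} {u : List (Fin n)} (h : ∀ a ∈ u, a < i) :
    ka i * ofList u * ka i = ka i * ofList u := by
  induction u using List.reverseRecOn with
  | nil => simpa using (isIdempotentElem_ka i).eq
  | append_singleton v j ih =>
    simp only [List.mem_append, List.mem_singleton, or_imp, forall_and, forall_eq] at h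
    calc ka i * ofList (v ++ [j]) * ka i = ka i * ofList v * (ka i * ka j * ka i) := by
          rw [← mul_assoc (ka i * ofList v), ← mul_assoc (ka i * ofList v), ih h.1]
          simp [mul_assoc]
      _ = ka i * ofList (v ++ [j]) := by
          rw [ka_mul_ka_mul_ka_of_gt h.2, ← mul_assoc, ih h.1]; simp [mul_assoc]

def Reduced (w : List (Fin n)) : Prop :=
  ∀ j, w.SeparatedBy (· < j) j ∧ w.SeparatedBy (j < ·) j

theorem exists_shorter_of_not_reduced {w : List (Fin n)} (hw : ¬Reduced w) :
    ∃ v, ofList v = ofList w ∧ v.length < w.length := by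
  obtain ⟨j, hj⟩ := not_forall.1 hw
  suffices ∃ u, j :: u ++ [j] <:+: w ∧
      ∃ v, ofList v = ofList (j :: u ++ [j]) ∧ v.length ≤ u.length + 1 by
    obtain ⟨u, ⟨s, t, rfl⟩, v, hv, hlen⟩ := this
    refine ⟨s ++ v ++ t, ofList_append_append_congr hv s t, ?_⟩
    simp only [List.length_append, List.length_cons]
    omega
  rcases not_and_or.1 hj with h | h
  · obtain ⟨u, hu, hju, hp⟩ : ∃ u, j :: u ++ [j] <:+: w ∧ j ∉ u ∧ ∀ a ∈ u, j ≤ a := by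
      simpa [List.SeparatedBy] using h
    have hgt : ∀ a ∈ u, j < a := fun a ha => (hp a ha).lt_of_ne (by rintro rfl; exact hju ha)
    exact ⟨u, hu, u ++ [j], by simpa [mul_assoc] using (ka_mul_ofList_mul_ka_of_lt hgt).symm,
      by simp⟩
  · obtain ⟨u, hu, hju, hp⟩ : ∃ u, j :: u ++ [j] <:+: w ∧ j ∉ u ∧ ∀ a ∈ u, a ≤ j := by
      simpa [List.SeparatedBy] using h
    have hlt : ∀ a ∈ u, a < j := fun a ha => (hp a ha).lt_of_ne (by rintro rfl; exact hju ha)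
    exact ⟨u, hu, j :: u, by simpa [mul_assoc] using (ka_mul_ofList_mul_ka_of_gt hlt).symm,
      by simp⟩

theorem exists_reduced_ofList_eq (w : List (Fin n)) :
    ∃ v, ofList v = ofList w ∧ v.length ≤ w.length ∧ Reduced v := by
  by_cases hw : Reduced w
  · exact ⟨w, rfl, le_rfl, hw⟩
  obtain ⟨v, hv, hlt⟩ := exists_shorter_of_not_reduced hw
  obtain ⟨v', hv', hle, hred⟩ := exists_reduced_ofList_eq v
  exact ⟨v', hv'.trans hv, by omega, hred⟩
termination_by w.length

theorem Reduced.count_le {w : List (Fin n)} (hw : Reduced w) (j : Fin n) :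
    w.count j ≤ 2 ^ min (j : ℕ) j.rev := by
  have below : w.count j ≤ 2 ^ (j : ℕ) := by
    refine Fin.le_two_pow_of_le_one_add_sum (g := fun k => w.count k) (fun k => ?_) j
    simpa [List.sum_count_eq_countP] using List.count_le_one_add_countP_of_separatedBy (hw k).1
  have above : w.count j.rev.rev ≤ 2 ^ (j.rev : ℕ) := by
    refine Fin.le_two_pow_of_le_one_add_sum (g := fun k => w.count k.rev) (fun k => ?_) j.rev
    have : ∑ i ∈ Finset.Iio k, w.count i.rev = ∑ i ∈ Finset.Ioi k.rev, w.count i := by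
      rw [← Fin.map_revPerm_Iio, Finset.sum_map]; rfl
    rw [this]
    simpa [List.sum_count_eq_countP] using List.count_le_one_add_countP_of_separatedBy (hw k.rev).2
  rw [Fin.rev_rev] at above
  rcases min_choice (j : ℕ) j.rev with h | h <;> rw [h] <;> assumption

theorem Reduced.length_le {w : List (Fin n)} (hw : Reduced w) : w.length ≤ Lbound n :=
  calc w.length = ∑ j, w.count j := by simp [List.sum_count_eq_countP]
    _ ≤ ∑ j : Fin n, 2 ^ min (j : ℕ) j.rev := Finset.sum_le_sum fun j _ => hw.count_le j
    _ = Lbound n := sum_two_pow_min_rev n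

theorem exists_ofList_eq_length_le (x : Kiselman n) :
    ∃ w, ofList w = x ∧ w.length ≤ Lbound n := by
  obtain ⟨w, rfl⟩ := PresentedMonoid.surjective_mk x
  obtain ⟨v, hv, -, hred⟩ := exists_reduced_ofList_eq (FreeMonoid.toList w)
  exact ⟨v, hv.trans (by simp [ofList, kmk]), hred.length_le⟩

@[simp] theorem ofList_replicate (k : ℕ) (i : Fin n) : ofList (List.replicate k i) = ka i ^ k := by
  induction k with
  | zero => rfl
  | succ k ih => simp [List.replicate_succ, ih, pow_succ']

theorem exists_ofList_eq_length_eq {x : Kiselman n} (hx : x ≠ 1) :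
    ∃ w, ofList w = x ∧ w.length = Lbound n := by
  obtain ⟨w, rfl, hlen⟩ := exists_ofList_eq_length_le x
  obtain ⟨j, t, rfl⟩ := List.exists_cons_of_ne_nil (l := w) (by rintro rfl; exact hx rfl)
  refine ⟨List.replicate (Lbound n - (t.length + 1)) j ++ j :: t, ?_, ?_⟩
  · rw [ofList_append, ofList_replicate, ofList_cons, ← mul_assoc, ← pow_succ,
      (isIdempotentElem_ka j).pow_succ_eq]
  · simp only [List.length_append, List.length_replicate, List.length_cons] at hlen ⊢
    omega

end Kiselman

/-- Every non-identity element of `K_n` is represented by a word of length at most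
`L(n)`; consequently `K_n` is finite and `|K_n| ≤ 1 + n^{L(n)}`. -/
theorem kiselman_finite (n : ℕ) :
    (∀ x : Kiselman n, x ≠ 1 → ∃ w : FreeMonoid (Fin n),
      kmk n w = x ∧ w.toList.length ≤ Lbound n) ∧
    Finite (Kiselman n) ∧ Nat.card (Kiselman n) ≤ 1 + n ^ Lbound n := by
  let f : Option (List.Vector (Fin n) (Lbound n)) → Kiselman n :=
    fun o => o.elim 1 fun v => Kiselman.ofList v.toList
  have hf : Function.Surjective f := by
    intro x
    rcases eq_or_ne x 1 with rfl | hx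
    · exact ⟨none, rfl⟩
    · obtain ⟨w, hw, hlen⟩ := Kiselman.exists_ofList_eq_length_eq hx
      exact ⟨some ⟨w, hlen⟩, hw⟩
  refine ⟨fun x _ => ?_, Finite.of_surjective f hf, ?_⟩
  · obtain ⟨w, hw, hlen⟩ := Kiselman.exists_ofList_eq_length_le x
    exact ⟨FreeMonoid.ofList w, hw, hlen⟩
  · simpa [Nat.card_eq_fintype_card, add_comm] using Nat.card_le_card_of_surjective f hf
end

section
/- For every word w over {a_1,...,a_n}, the equivalence class of w in the Kiselman semigroup K_n contains a unique word of minimal length; moreover a word v is of minimal length in its class if and only if for every i, every subword of v of the form a_i u a_i has the property that u contains some letter a_j with j > i and some letter a_k with k < i. -/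
open Relation

namespace KisWork

variable {n : ℕ}

/-- `Acond x a`: `x` ends with `a` followed by letters all `< a`. -/
def Acond (x : List (Fin n)) (a : Fin n) : Prop :=
  ∃ x₁ u, x = x₁ ++ a :: u ∧ ∀ c ∈ u, c < a

/-- `Bcond z a`: `z` starts with letters all `> a` followed by an `a`. -/
def Bcond (z : List (Fin n)) (a : Fin n) : Prop :=
  ∃ u z₁, z = u ++ a :: z₁ ∧ ∀ c ∈ u, a < c

/-- One rewriting step: delete a deletable letter. -/
def KStep (l l' : List (Fin n)) : Prop :=
  ∃ x a z, l = x ++ a :: z ∧ l' = x ++ z ∧ (Acond x a ∨ Bcond z a)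

lemma KStep.length {l l' : List (Fin n)} (h : KStep l l') :
    l'.length + 1 = l.length := by
  obtain ⟨x, a, z, h1, h2, -⟩ := h
  subst h1 h2; simp [List.length_append]; omega

/-- Map a list to the Kiselman monoid. -/
def mkl (l : List (Fin n)) : Kiselman n := kmk n (FreeMonoid.ofList l)

lemma mkl_append (l m : List (Fin n)) : mkl (l ++ m) = mkl l * mkl m := by
  rw [mkl, FreeMonoid.ofList_append, map_mul]; rfl

lemma mkl_cons (a : Fin n) (l : List (Fin n)) :
    mkl (a :: l) = kmk n (.of a) * mkl l := by
  rw [show (a :: l) = [a] ++ l from rfl, mkl_append]; rfl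

lemma rel_sound {x y : FreeMonoid (Fin n)} (h : KisRel n x y) : kmk n x = kmk n y :=
  Quotient.sound (ConGen.Rel.of _ _ h)

end KisWork

namespace KisWork
open Relation
variable {n : ℕ}

local notation "g" a => kmk n (FreeMonoid.of a)

lemma mkl_nil : (mkl [] : Kiselman n) = 1 := rfl

lemma mkl_singleton (c : Fin n) : mkl [c] = kmk n (.of c) := rfl

lemma kidem (a : Fin n) : (g a) * (g a) = (g a) := by
  have := rel_sound (KisRel.idem a); simp only [map_mul] at this; exact this

lemma kbraid₁ {i j : Fin n} (h : i < j) : (g i) * (g j) * (g i) = (g j) * (g i) := by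
  have := rel_sound (KisRel.braid₁ (n := n) h); simp only [map_mul] at this; exact this

lemma kbraid₂ {i j : Fin n} (h : i < j) : (g j) * (g i) * (g j) = (g j) * (g i) := by
  have := rel_sound (KisRel.braid₂ (n := n) h); simp only [map_mul] at this; exact this

lemma kidem' (a : Fin n) (t : Kiselman n) : (g a) * ((g a) * t) = (g a) * t := by
  rw [← mul_assoc, kidem]

lemma kbraid₂' {c a : Fin n} (h : c < a) (t : Kiselman n) :
    (g a) * ((g c) * ((g a) * t)) = (g a) * ((g c) * t) := by
  rw [← mul_assoc, ← mul_assoc, ← mul_assoc, kbraid₂ h, mul_assoc]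

lemma kbraid₁' {c a : Fin n} (h : a < c) (t : Kiselman n) :
    (g a) * ((g c) * ((g a) * t)) = (g c) * ((g a) * t) := by
  rw [← mul_assoc, ← mul_assoc, ← mul_assoc, kbraid₁ h, mul_assoc]

lemma lemA' {a : Fin n} (u : List (Fin n)) (h : ∀ c ∈ u, c < a) (t : Kiselman n) :
    (g a) * (mkl u * ((g a) * t)) = (g a) * (mkl u * t) := by
  induction u using List.reverseRecOn generalizing t with
  | nil => simpa [mkl_nil] using kidem' a t
  | append_singleton u c ih =>
    have hc : c < a := h c (by simp)
    have ih' := ih (fun x hx => h x (by simp [hx]))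
    simp only [mkl_append, mkl_singleton, mul_assoc]
    calc (g a) * (mkl u * ((g c) * ((g a) * t)))
        = (g a) * (mkl u * ((g a) * ((g c) * ((g a) * t)))) := (ih' _).symm
      _ = (g a) * (mkl u * ((g a) * ((g c) * t))) := by rw [kbraid₂' hc]
      _ = (g a) * (mkl u * ((g c) * t)) := ih' _

lemma lemB' {a : Fin n} (u : List (Fin n)) (h : ∀ c ∈ u, a < c) (t : Kiselman n) :
    (g a) * (mkl u * ((g a) * t)) = mkl u * ((g a) * t) := by
  induction u generalizing t with
  | nil => simpa [mkl_nil] using kidem' a t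
  | cons c u ih =>
    have hc : a < c := h c (by simp)
    have ih' := ih (fun x hx => h x (by simp [hx]))
    simp only [mkl_cons, mul_assoc]
    calc (g a) * ((g c) * (mkl u * ((g a) * t)))
        = (g a) * ((g c) * ((g a) * (mkl u * ((g a) * t)))) := by rw [ih' t]
      _ = (g c) * ((g a) * (mkl u * ((g a) * t))) := kbraid₁' hc _
      _ = (g c) * (mkl u * ((g a) * t)) := by rw [ih' t]

lemma KStep.sound {l l' : List (Fin n)} (h : KStep l l') : mkl l = mkl l' := by
  obtain ⟨x, a, z, h1, h2, hAB | hAB⟩ := h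
  · obtain ⟨x₁, u, hx, hu⟩ := hAB
    subst h1 h2 hx
    simp only [List.append_assoc, List.cons_append, mkl_append, mkl_cons, mul_assoc,
      List.nil_append]
    rw [lemA' u hu]
  · obtain ⟨u, z₁, hz, hu⟩ := hAB
    subst h1 h2 hz
    simp only [List.append_assoc, List.cons_append, mkl_append, mkl_cons, mul_assoc,
      List.nil_append]
    rw [lemB' u hu]

end KisWork

namespace KisWork
open Relation
variable {n : ℕ}

lemma KStep.append_left {l l' : List (Fin n)} (m : List (Fin n)) (h : KStep l l') :
    KStep (m ++ l) (m ++ l') := by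
  obtain ⟨x, a, z, h1, h2, hc⟩ := h
  refine ⟨m ++ x, a, z, by simp [h1], by simp [h2], ?_⟩
  rcases hc with ⟨x₁, u, hx, hu⟩ | hB
  · exact Or.inl ⟨m ++ x₁, u, by simp [hx], hu⟩
  · exact Or.inr hB

lemma KStep.append_right {l l' : List (Fin n)} (m : List (Fin n)) (h : KStep l l') :
    KStep (l ++ m) (l' ++ m) := by
  obtain ⟨x, a, z, h1, h2, hc⟩ := h
  refine ⟨x, a, z ++ m, by simp [h1], by simp [h2], ?_⟩
  rcases hc with hA | ⟨u, z₁, hz, hu⟩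
  · exact Or.inl hA
  · exact Or.inr ⟨u, z₁ ++ m, by simp [hz], hu⟩

lemma eqv_append_left (m : List (Fin n)) {l l' : List (Fin n)} (h : EqvGen KStep l l') :
    EqvGen KStep (m ++ l) (m ++ l') := by
  induction h with
  | rel x y hxy => exact EqvGen.rel _ _ (hxy.append_left m)
  | refl x => exact EqvGen.refl _
  | symm x y _ ih => exact ih.symm _ _
  | trans x y z _ _ ih1 ih2 => exact ih1.trans _ _ _ ih2

lemma eqv_append_right (m : List (Fin n)) {l l' : List (Fin n)} (h : EqvGen KStep l l') :
    EqvGen KStep (l ++ m) (l' ++ m) := by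
  induction h with
  | rel x y hxy => exact EqvGen.rel _ _ (hxy.append_right m)
  | refl x => exact EqvGen.refl _
  | symm x y _ ih => exact ih.symm _ _
  | trans x y z _ _ ih1 ih2 => exact ih1.trans _ _ _ ih2

lemma eqv_append {a b c d : List (Fin n)} (h1 : EqvGen KStep a b) (h2 : EqvGen KStep c d) :
    EqvGen KStep (a ++ c) (b ++ d) :=
  (eqv_append_right c h1).trans _ _ _ (eqv_append_left b h2)

lemma kisrel_kstep {x y : FreeMonoid (Fin n)} (h : KisRel n x y) :
    KStep x.toList y.toList := by
  cases h with
  | idem i =>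
      exact ⟨[i], i, [], rfl, rfl, Or.inl ⟨[], [], rfl, by simp⟩⟩
  | braid₁ h =>
      exact ⟨[], _, _, rfl, rfl, Or.inr ⟨[_], [], rfl, by simpa using h⟩⟩
  | braid₂ h =>
      exact ⟨[_, _], _, [], rfl, rfl, Or.inl ⟨[], [_], rfl, by simpa using h⟩⟩

lemma eqv_of_congen {v w : FreeMonoid (Fin n)} (h : ConGen.Rel (KisRel n) v w) :
    EqvGen KStep v.toList w.toList := by
  induction h with
  | of x y hxy => exact EqvGen.rel _ _ (kisrel_kstep hxy)
  | refl x => exact EqvGen.refl _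
  | symm _ ih => exact ih.symm _ _
  | trans _ _ ih1 ih2 => exact ih1.trans _ _ _ ih2
  | mul _ _ ih1 ih2 => exact eqv_append ih1 ih2

lemma kmk_eq_iff {l m : List (Fin n)} :
    mkl l = mkl m ↔ EqvGen KStep l m := by
  constructor
  · intro h
    have h' : ConGen.Rel (KisRel n) (FreeMonoid.ofList l) (FreeMonoid.ofList m) :=
      Quotient.exact h
    simpa using eqv_of_congen h'
  · intro h
    induction h with
    | rel x y hxy => exact hxy.sound
    | refl x => rfl
    | symm x y _ ih => exact ih.symm
    | trans x y z _ _ ih1 ih2 => exact ih1.trans ih2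

end KisWork

namespace KisWork
open Relation
variable {n : ℕ}

lemma cons_split {α : Type*} {x z x' z' : List α} {a a' : α}
    (h : x ++ a :: z = x' ++ a' :: z') :
    (x = x' ∧ a = a' ∧ z = z') ∨
    (∃ t, x' = x ++ a :: t ∧ z = t ++ a' :: z') ∨
    (∃ t, x = x' ++ a' :: t ∧ z' = t ++ a :: z) := by
  induction x generalizing x' with
  | nil =>
    cases x' with
    | nil => simp_all
    | cons b x' =>
      simp only [List.nil_append, List.cons_append, List.cons.injEq] at h
      exact Or.inr (Or.inl ⟨x', by simp [h.1], h.2⟩)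
  | cons b x ih =>
    cases x' with
    | nil =>
      simp only [List.nil_append, List.cons_append, List.cons.injEq] at h
      exact Or.inr (Or.inr ⟨x, by simp [h.1], h.2.symm⟩)
    | cons b' x' =>
      simp only [List.cons_append, List.cons.injEq] at h
      obtain ⟨rfl, h2⟩ := h
      rcases ih h2 with ⟨rfl, rfl, rfl⟩ | ⟨t, rfl, rfl⟩ | ⟨t, rfl, rfl⟩
      · exact Or.inl ⟨rfl, rfl, rfl⟩
      · exact Or.inr (Or.inl ⟨t, by simp, rfl⟩)
      · exact Or.inr (Or.inr ⟨t, by simp, rfl⟩)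

lemma diamond_core {x y z : List (Fin n)} {a b : Fin n}
    (C1 : Acond x a ∨ Bcond (y ++ b :: z) a)
    (C2 : Acond (x ++ a :: y) b ∨ Bcond z b) :
    (a = b ∧ y = []) ∨
    ((Acond x a ∨ Bcond (y ++ z) a) ∧ (Acond (x ++ y) b ∨ Bcond z b)) := by
  have H1 : (Acond x a ∨ Bcond (y ++ z) a) ∨ (a = b ∧ ∀ c ∈ y, a < c) := by
    rcases C1 with hA | ⟨u, z₁, hz, hu⟩
    · exact Or.inl (Or.inl hA)
    · rcases cons_split hz.symm with ⟨rfl, rfl, rfl⟩ | ⟨t, rfl, rfl⟩ | ⟨t, rfl, rfl⟩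
      · exact Or.inr ⟨rfl, hu⟩
      · -- y = u ++ a :: t,  z₁ = t ++ b :: z
        exact Or.inl (Or.inr ⟨u, t ++ z, by simp, hu⟩)
      · -- u = y ++ b :: t,  z = t ++ a :: z₁
        refine Or.inl (Or.inr ⟨y ++ t, z₁, by simp, fun c hc => ?_⟩)
        simp only [List.mem_append] at hc
        rcases hc with hc | hc
        · exact hu c (by simp [hc])
        · exact hu c (by simp [hc])
  have H2 : (Acond (x ++ y) b ∨ Bcond z b) ∨ (b = a ∧ ∀ c ∈ y, c < b) := by
    rcases C2 with ⟨x₁, u, hx, hu⟩ | hB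
    · rcases cons_split hx.symm with ⟨rfl, rfl, rfl⟩ | ⟨t, rfl, rfl⟩ | ⟨t, rfl, rfl⟩
      · exact Or.inr ⟨rfl, hu⟩
      · -- x = x₁ ++ b :: t, u = t ++ a :: y
        refine Or.inl (Or.inl ⟨x₁, t ++ y, by simp, fun c hc => ?_⟩)
        simp only [List.mem_append] at hc
        rcases hc with hc | hc
        · exact hu c (by simp [hc])
        · exact hu c (by simp [hc])
      · -- x₁ = x ++ a :: t, y = t ++ b :: u
        exact Or.inl (Or.inl ⟨x ++ t, u, by simp, hu⟩)
    · exact Or.inl (Or.inr hB)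
  rcases H1 with good1 | ⟨rfl, hy1⟩
  · rcases H2 with good2 | ⟨rfl, hy2⟩
    · exact Or.inr ⟨good1, good2⟩
    · -- b = a (substituted: a := b), y all < b; derive good2 or y = []
      rcases C1 with ⟨x₁, u, hx, hu⟩ | ⟨u, z₁, hz, hu⟩
      · refine Or.inr ⟨good1, Or.inl ⟨x₁, u ++ y, by simp [hx], fun c hc => ?_⟩⟩
        simp only [List.mem_append] at hc
        rcases hc with hc | hc
        · exact hu c hc
        · exact hy2 c hc
      · rcases cons_split hz.symm with ⟨rfl, -, rfl⟩ | ⟨t, rfl, rfl⟩ | ⟨t, rfl, rfl⟩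
        · -- u = y : y all > b and all < b ⇒ y = []
          cases u with
          | nil => exact Or.inl ⟨rfl, rfl⟩
          | cons c y =>
            exact absurd (hu c (by simp)) (by have := hy2 c (by simp); intro h; exact absurd h (not_lt.2 this.le))
        · -- y = u ++ b :: t : b ∈ y ⇒ b < b
          exact absurd (hy2 b (by simp)) (lt_irrefl b)
        · -- u = y ++ b :: t : b ∈ u ⇒ b < b
          exact absurd (hu b (by simp)) (lt_irrefl b)
  · -- a = b (substituted b := a?), y all > a
    rcases H2 with good2 | ⟨-, hy2⟩
    · rcases C2 with ⟨x₁, u, hx, hu⟩ | ⟨u, z₁, hz, hu⟩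
      · rcases cons_split hx.symm with ⟨rfl, -, rfl⟩ | ⟨t, rfl, rfl⟩ | ⟨t, rfl, rfl⟩
        · cases u with
          | nil => exact Or.inl ⟨rfl, rfl⟩
          | cons c y =>
            exact absurd (hu c (by simp)) (by have := hy1 c (by simp); exact not_lt.2 this.le)
        · -- u = t ++ a :: y ⇒ a ∈ u ⇒ a < a
          exact absurd (hu _ (by simp)) (lt_irrefl _)
        · -- y = t ++ a :: u ⇒ a ∈ y ⇒ a < a
          exact absurd (hy1 _ (by simp)) (lt_irrefl _)
      · refine Or.inr ⟨Or.inr ⟨y ++ u, z₁, by simp [hz], fun c hc => ?_⟩, good2⟩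
        simp only [List.mem_append] at hc
        rcases hc with hc | hc
        · exact hy1 c hc
        · exact hu c hc
    · cases y with
      | nil => exact Or.inl ⟨rfl, rfl⟩
      | cons c y =>
        exact absurd (hy1 c (by simp)) (by have := hy2 c (by simp); exact not_lt.2 this.le)

end KisWork

namespace KisWork
open Relation
variable {n : ℕ}

lemma diamond_aux {x y z : List (Fin n)} {a b : Fin n}
    (C1 : Acond x a ∨ Bcond (y ++ b :: z) a)
    (C2 : Acond (x ++ a :: y) b ∨ Bcond z b) :
    x ++ (y ++ b :: z) = (x ++ a :: y) ++ z ∨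
    ∃ d, KStep (x ++ (y ++ b :: z)) d ∧ KStep ((x ++ a :: y) ++ z) d := by
  rcases diamond_core C1 C2 with ⟨rfl, rfl⟩ | ⟨good1, good2⟩
  · left; simp
  · right
    refine ⟨x ++ (y ++ z), ⟨x ++ y, b, z, by simp, by simp, good2⟩,
      ⟨x, a, y ++ z, by simp, by simp, good1⟩⟩

lemma diamond {l r₁ r₂ : List (Fin n)} (h1 : KStep l r₁) (h2 : KStep l r₂) :
    r₁ = r₂ ∨ ∃ d, KStep r₁ d ∧ KStep r₂ d := by
  obtain ⟨x, a, z, rfl, rfl, C1⟩ := h1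
  obtain ⟨x', a', z', h, rfl, C2⟩ := h2
  rcases cons_split h with ⟨rfl, rfl, rfl⟩ | ⟨t, rfl, rfl⟩ | ⟨t, rfl, rfl⟩
  · left; rfl
  · -- x' = x ++ a :: t, z = t ++ a' :: z'
    rcases diamond_aux C1 C2 with heq | ⟨d, hd1, hd2⟩
    · left; simpa using heq
    · right; exact ⟨d, by simpa using hd1, by simpa using hd2⟩
  · -- x = x' ++ a' :: t, z' = t ++ a :: z
    rcases diamond_aux C2 C1 with heq | ⟨d, hd1, hd2⟩
    · left; simpa using heq.symm
    · right; exact ⟨d, by simpa using hd2, by simpa using hd1⟩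

lemma semiconfluent :
    ∀ a b c : List (Fin n), KStep a b → KStep a c →
      ∃ d, ReflGen KStep b d ∧ ReflTransGen KStep c d := by
  intro a b c h1 h2
  rcases diamond h1 h2 with rfl | ⟨d, hd1, hd2⟩
  · exact ⟨b, ReflGen.refl, ReflTransGen.refl⟩
  · exact ⟨d, ReflGen.single hd1, ReflTransGen.single hd2⟩

lemma rtg_eqvgen {l d : List (Fin n)} (h : ReflTransGen KStep l d) :
    EqvGen KStep l d := by
  induction h with
  | refl => exact EqvGen.refl _
  | tail _ hstep ih => exact ih.trans _ _ _ (EqvGen.rel _ _ hstep)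

lemma eqv_iff_join {l m : List (Fin n)} :
    EqvGen KStep l m ↔ Join (ReflTransGen KStep) l m := by
  have hequiv : Equivalence (Join (ReflTransGen (KStep (n := n)))) :=
    equivalence_join_reflTransGen semiconfluent
  constructor
  · intro h
    induction h with
    | rel x y hxy => exact ⟨y, ReflTransGen.single hxy, ReflTransGen.refl⟩
    | refl x => exact hequiv.refl x
    | symm x y _ ih => exact hequiv.symm ih
    | trans x y z _ _ ih1 ih2 => exact hequiv.trans ih1 ih2
  · rintro ⟨d, hld, hmd⟩
    exact (rtg_eqvgen hld).trans _ _ _ ((rtg_eqvgen hmd).symm _ _)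

lemma mkl_eq_iff_join {l m : List (Fin n)} :
    mkl l = mkl m ↔ Join (ReflTransGen KStep) l m := by
  rw [kmk_eq_iff, eqv_iff_join]

/-- A word is normal iff no step applies. -/
def NormalW (l : List (Fin n)) : Prop := ∀ l', ¬ KStep l l'

lemma rtg_length {l d : List (Fin n)} (h : ReflTransGen KStep l d) :
    d.length ≤ l.length := by
  induction h with
  | refl => exact le_refl _
  | tail _ hstep ih => have := hstep.length; omega

lemma rtg_eq_of_le {l d : List (Fin n)} (h : ReflTransGen KStep l d)
    (hle : l.length ≤ d.length) : l = d := by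
  rcases h.cases_head with rfl | ⟨e, he, hed⟩
  · rfl
  · have h1 := he.length
    have h2 := rtg_length hed
    omega

lemma normal_rtg_eq {l d : List (Fin n)} (hn : NormalW l) (h : ReflTransGen KStep l d) :
    l = d := by
  rcases h.cases_head with rfl | ⟨e, he, _⟩
  · rfl
  · exact absurd he (hn e)

lemma exists_nf (l : List (Fin n)) :
    ∃ d, ReflTransGen KStep l d ∧ NormalW d := by
  by_cases h : ∃ l', KStep l l'
  · obtain ⟨l', hl'⟩ := h
    have hlen : l'.length < l.length := by have := hl'.length; omega
    obtain ⟨d, hd1, hd2⟩ := exists_nf l'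
    exact ⟨d, ReflTransGen.head hl' hd1, hd2⟩
  · exact ⟨l, ReflTransGen.refl, fun l' hl' => h ⟨l', hl'⟩⟩
termination_by l.length
decreasing_by exact hlen

end KisWork

namespace KisWork
open Relation
variable {n : ℕ}

lemma first_split {α : Type*} [DecidableEq α] {a : α} {l : List α} (h : a ∈ l) :
    ∃ s t, l = s ++ a :: t ∧ a ∉ s := by
  induction l with
  | nil => simp at h
  | cons b l ih =>
    by_cases hb : a = b
    · exact ⟨[], l, by simp [hb], by simp⟩
    · obtain ⟨s, t, rfl, hs⟩ := ih ((List.mem_cons.1 h).resolve_left hb)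
      exact ⟨b :: s, t, by simp, by simp [hs, hb]⟩

lemma last_split {α : Type*} [DecidableEq α] {a : α} {l : List α} (h : a ∈ l) :
    ∃ s t, l = s ++ a :: t ∧ a ∉ t := by
  induction l with
  | nil => simp at h
  | cons b l ih =>
    by_cases hl : a ∈ l
    · obtain ⟨s, t, rfl, ht⟩ := ih hl
      exact ⟨b :: s, t, by simp, ht⟩
    · exact ⟨[], l, by simp [(List.mem_cons.1 h).resolve_right hl], hl⟩

lemma step_of_no_gt {p u s : List (Fin n)} {i : Fin n} (h : ∀ j ∈ u, ¬ i < j) :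
    ∃ v', KStep (p ++ i :: u ++ i :: s) v' := by
  by_cases hmem : i ∈ u
  · obtain ⟨u₁, u₂, rfl, hni⟩ := first_split hmem
    refine ⟨(p ++ i :: u₁) ++ (u₂ ++ i :: s), p ++ i :: u₁, i, u₂ ++ i :: s,
      by simp, rfl, Or.inl ⟨p, u₁, rfl, fun c hc => ?_⟩⟩
    have h1 : ¬ i < c := h c (by simp [hc])
    have h2 : c ≠ i := fun hh => hni (hh ▸ hc)
    exact (not_lt.1 h1).lt_of_ne h2
  · refine ⟨(p ++ i :: u) ++ s, p ++ i :: u, i, s, by simp, rfl,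
      Or.inl ⟨p, u, rfl, fun c hc => ?_⟩⟩
    have h1 : ¬ i < c := h c hc
    have h2 : c ≠ i := fun hh => hmem (hh ▸ hc)
    exact (not_lt.1 h1).lt_of_ne h2

lemma step_of_no_lt {p u s : List (Fin n)} {i : Fin n} (h : ∀ k ∈ u, ¬ k < i) :
    ∃ v', KStep (p ++ i :: u ++ i :: s) v' := by
  by_cases hmem : i ∈ u
  · obtain ⟨u₁, u₂, rfl, hni⟩ := last_split hmem
    refine ⟨(p ++ i :: u₁) ++ (u₂ ++ i :: s), p ++ i :: u₁, i, u₂ ++ i :: s,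
      by simp, rfl, Or.inr ⟨u₂, s, rfl, fun c hc => ?_⟩⟩
    have h1 : ¬ c < i := h c (by simp [hc])
    have h2 : c ≠ i := fun hh => hni (hh ▸ hc)
    exact (not_lt.1 h1).lt_of_ne' h2
  · refine ⟨p ++ (u ++ i :: s), p, i, u ++ i :: s, by simp, rfl,
      Or.inr ⟨u, s, rfl, fun c hc => ?_⟩⟩
    have h1 : ¬ c < i := h c hc
    have h2 : c ≠ i := fun hh => hmem (hh ▸ hc)
    exact (not_lt.1 h1).lt_of_ne' h2

/-- The reducedness condition, on lists. -/
def RedL (v : List (Fin n)) : Prop :=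
  ∀ (i : Fin n) (p u s : List (Fin n)), v = p ++ i :: u ++ i :: s →
    (∃ j ∈ u, i < j) ∧ (∃ k ∈ u, k < i)

lemma normal_iff_redL {v : List (Fin n)} : NormalW v ↔ RedL v := by
  constructor
  · intro hn i p u s hdec
    constructor
    · by_contra hc
      push_neg at hc
      obtain ⟨v', hv'⟩ := step_of_no_gt (fun j hj => not_lt.2 (hc j hj))
      exact hn v' (hdec ▸ hv')
    · by_contra hc
      push_neg at hc
      obtain ⟨v', hv'⟩ := step_of_no_lt (fun k hk => not_lt.2 (hc k hk))
      exact hn v' (hdec ▸ hv')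
  · rintro hr l' ⟨x, a, z, h1, h2, hc⟩
    rcases hc with ⟨x₁, u, rfl, hu⟩ | ⟨u, z₁, rfl, hu⟩
    · obtain ⟨⟨j, hj, hij⟩, -⟩ := hr a x₁ u z (by simpa using h1)
      exact absurd (hu j hj) (by omega)
    · obtain ⟨-, ⟨k, hk, hki⟩⟩ := hr a x u z₁ (by simpa using h1)
      exact absurd (hu k hk) (by omega)

end KisWork

namespace KisWork
open Relation
variable {n : ℕ}

lemma mkl_toList (v : FreeMonoid (Fin n)) : mkl v.toList = kmk n v := rfl

lemma freemonoid_decomp {v : FreeMonoid (Fin n)} {i : Fin n} {p u s : List (Fin n)}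
    (h : v.toList = p ++ i :: u ++ i :: s) :
    v = FreeMonoid.ofList p * (FreeMonoid.of i * FreeMonoid.ofList u * FreeMonoid.of i) *
      FreeMonoid.ofList s := by
  have h1 : v = FreeMonoid.ofList (p ++ i :: u ++ i :: s) := by
    rw [← h]; rfl
  rw [h1, show p ++ i :: u ++ i :: s = p ++ (([i] ++ u) ++ [i]) ++ s by simp]
  simp only [FreeMonoid.ofList_append]
  rfl

/-- Equivalence between the `FreeMonoid` statement of reducedness and `RedL`. -/
lemma cond_iff_redL (v : FreeMonoid (Fin n)) :
    (∀ (i : Fin n) (p u s : FreeMonoid (Fin n)),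
        v = p * (.of i * u * .of i) * s →
        (∃ j ∈ u.toList, i < j) ∧ (∃ k ∈ u.toList, k < i)) ↔ RedL v.toList := by
  constructor
  · intro hcond i p u s hdec
    exact hcond i (FreeMonoid.ofList p) (FreeMonoid.ofList u) (FreeMonoid.ofList s)
      (freemonoid_decomp hdec)
  · intro hr i p u s hdec
    refine hr i p.toList u.toList s.toList ?_
    rw [hdec]
    simp [FreeMonoid.toList_mul, FreeMonoid.toList_of]

end KisWork

open KisWork Relation in
/-- Theorem 2: the equivalence class of every word contains a unique word of minimal
length, and a word `v` is of minimal length in its class iff every subword `aᵢ u aᵢ` of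
`v` is such that `u` contains a letter with index `> i` and a letter with index `< i`. -/
theorem kiselman_canonical_form (n : ℕ) (w : FreeMonoid (Fin n)) :
    (∃! v : FreeMonoid (Fin n), kmk n v = kmk n w ∧
      ∀ u : FreeMonoid (Fin n), kmk n u = kmk n w → v.toList.length ≤ u.toList.length) ∧
    (∀ v : FreeMonoid (Fin n), kmk n v = kmk n w →
      ((∀ u : FreeMonoid (Fin n), kmk n u = kmk n w → v.toList.length ≤ u.toList.length) ↔
        (∀ (i : Fin n) (p u s : FreeMonoid (Fin n)),
          v = p * (.of i * u * .of i) * s →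
          (∃ j ∈ u.toList, i < j) ∧ (∃ k ∈ u.toList, k < i)))) := by
  obtain ⟨d, hwd, hdn⟩ := exists_nf w.toList
  have hdw : kmk n (FreeMonoid.ofList d) = kmk n w := by
    rw [← mkl_toList w]
    exact (mkl_eq_iff_join.mpr ⟨d, hwd, ReflTransGen.refl⟩).symm
  -- d is ≤ every equivalent word in length
  have hmin : ∀ u : FreeMonoid (Fin n), kmk n u = kmk n w → d.length ≤ u.toList.length := by
    intro u hu
    have : mkl u.toList = mkl d := by
      rw [mkl_toList u, hu, ← hdw]; rfl
    obtain ⟨e, hue, hde⟩ := mkl_eq_iff_join.mp this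
    have hed : d = e := normal_rtg_eq hdn hde
    exact rtg_length (hed ▸ hue)
  -- any equivalent normal word equals d
  have hnf_eq : ∀ v : FreeMonoid (Fin n), kmk n v = kmk n w → NormalW v.toList →
      v.toList = d := by
    intro v hv hn
    have : mkl v.toList = mkl d := by rw [mkl_toList v, hv, ← hdw]; rfl
    obtain ⟨e, hve, hde⟩ := mkl_eq_iff_join.mp this
    rw [normal_rtg_eq hn hve, normal_rtg_eq hdn hde]
  -- any equivalent minimal word equals d
  have huniq : ∀ v : FreeMonoid (Fin n), kmk n v = kmk n w →
      (∀ u : FreeMonoid (Fin n), kmk n u = kmk n w → v.toList.length ≤ u.toList.length) →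
      v.toList = d := by
    intro v hv hm
    have hle : v.toList.length ≤ d.length := hm (FreeMonoid.ofList d) hdw
    have : mkl v.toList = mkl d := by rw [mkl_toList v, hv, ← hdw]; rfl
    obtain ⟨e, hve, hde⟩ := mkl_eq_iff_join.mp this
    have hed : d = e := normal_rtg_eq hdn hde
    exact rtg_eq_of_le (hed ▸ hve) hle
  -- minimality is equivalent to being d
  have hmin_iff : ∀ v : FreeMonoid (Fin n), kmk n v = kmk n w →
      ((∀ u : FreeMonoid (Fin n), kmk n u = kmk n w → v.toList.length ≤ u.toList.length) ↔
        v.toList = d) := by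
    intro v hv
    constructor
    · exact huniq v hv
    · intro hvd u hu
      rw [hvd]
      exact hmin u hu
  constructor
  · refine ⟨FreeMonoid.ofList d, ⟨hdw, fun u hu => hmin u hu⟩, ?_⟩
    rintro v ⟨hv, hm⟩
    have := huniq v hv hm
    rw [← this]; rfl
  · intro v hv
    rw [hmin_iff v hv, cond_iff_redL v]
    constructor
    · intro hvd
      rw [hvd]
      exact normal_iff_redL.mp hdn
    · intro hred
      exact hnf_eq v hv (normal_iff_redL.mpr hred)
end

section
/- For every word w over {a_1,...,a_n} with content c(w) (the set of indices of letters occurring in w), the power w^k equals the idempotent e_{c(w)} for all k ≥ |c(w)|, where e_X denotes the product of the generators indexed by X in strictly decreasing order. -/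
/-!
Let `j` be the largest letter of `w`, write `w = u a_j v` and `m = |c(w)| - 1`, so that
`w^(m+1) = u (a_j v u)^m a_j v`. Since every letter is `≤ j`, the relation `a_j x a_j = a_j x`
(`x < j`) lets the leading `a_j` swallow all further occurrences of `a_j`: `a_j v u = a_j z` with
`c(z) = c(w) \ {j}`. The same relation gives `(a_j z)^m a_j = a_j z^m a_j`, and by induction on the
content `z^m = e_{c(z)}`, so the middle factor is `a_j e_{c(z)} a_j = a_j e_{c(z)} = e_{c(w)}`.
Finally `e_X` absorbs every generator indexed by `X` on either side, which removes `u`, `v` and any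
further powers of `w`. Only the relations are used, so the argument runs in any monoid.
-/

theorem IsIdempotentElem.mul_pow_mul_of_mul_mul_self {M : Type*} [Monoid M] {e s : M}
    (he : IsIdempotentElem e) (hs : e * s * e = e * s) (m : ℕ) :
    (e * s) ^ m * e = e * s ^ m * e := by
  induction m with
  | zero => simpa using he.eq.symm
  | succ m ih =>
    calc (e * s) ^ (m + 1) * e = e * s * ((e * s) ^ m * e) := by rw [pow_succ', mul_assoc]
      _ = e * s * e * s ^ m * e := by rw [ih]; simp only [mul_assoc]
      _ = e * s ^ (m + 1) * e := by rw [hs, pow_succ']; simp only [mul_assoc]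

section

variable {ι M : Type*} [LinearOrder ι] [Monoid M]

structure IsKiselmanFamily (a : ι → M) : Prop where
  mul_self : ∀ i, a i * a i = a i
  mul_mul_self_of_lt : ∀ {i j}, i < j → a i * a j * a i = a j * a i
  mul_mul_self_of_gt : ∀ {i j}, j < i → a i * a j * a i = a i * a j

def descProd (a : ι → M) (X : Finset ι) : M := ((X.sort (· ≤ ·)).reverse.map a).prod

theorem Finset.reverse_sort_insert_of_forall_lt {j : ι} {Y : Finset ι} (hY : ∀ y ∈ Y, y < j) :
    ((insert j Y).sort (· ≤ ·)).reverse = j :: (Y.sort (· ≤ ·)).reverse := by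
  refine List.Pairwise.eq_of_mem_iff (r := (· > ·)) ?_ ?_ (by simp)
  · exact List.pairwise_reverse.mpr (Finset.sortedLT_sort _).pairwise
  · exact List.pairwise_cons.mpr
      ⟨by simpa using hY, List.pairwise_reverse.mpr (Finset.sortedLT_sort _).pairwise⟩

theorem descProd_insert_of_forall_lt (a : ι → M) {j : ι} {Y : Finset ι} (hY : ∀ y ∈ Y, y < j) :
    descProd a (insert j Y) = a j * descProd a Y := by
  simp [descProd, Finset.reverse_sort_insert_of_forall_lt hY]

end

namespace IsKiselmanFamily

variable {ι M : Type*} [LinearOrder ι] [Monoid M] {a : ι → M} (h : IsKiselmanFamily a)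
include h

theorem mul_prod_map_filter_ne {g : M} {j : ι} (hg : g * a j = g) {l : List ι}
    (hl : ∀ x ∈ l, x ≤ j) : g * (l.map a).prod = g * ((l.filter (· ≠ j)).map a).prod := by
  induction l generalizing g with
  | nil => rfl
  | cons x t ih =>
    have ht : ∀ y ∈ t, y ≤ j := fun y hy => hl y (List.mem_cons_of_mem x hy)
    by_cases hxj : x = j
    · subst hxj
      have hfilter : (x :: t).filter (· ≠ x) = t.filter (· ≠ x) := by simp
      rw [hfilter, List.map_cons, List.prod_cons, ← mul_assoc, hg, ih hg ht]
    · have hgx : g * a x * a j = g * a x := by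
        rw [← hg, mul_assoc g, mul_assoc g,
          h.mul_mul_self_of_gt (lt_of_le_of_ne (hl x List.mem_cons_self) hxj)]
      have hfilter : (x :: t).filter (· ≠ j) = x :: t.filter (· ≠ j) := by simp [hxj]
      rw [hfilter, List.map_cons, List.map_cons, List.prod_cons, List.prod_cons, ← mul_assoc,
        ← mul_assoc, ih hgx ht]

theorem mul_prod_map_mul_self {j : ι} {l : List ι} (hl : ∀ x ∈ l, x < j) :
    a j * (l.map a).prod * a j = a j * (l.map a).prod := by
  have key := h.mul_prod_map_filter_ne (h.mul_self j) (l := l ++ [j]) (by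
    simp only [List.mem_append, List.mem_singleton]
    rintro x (hx | rfl)
    exacts [(hl x hx).le, le_rfl])
  have hfilter : (l ++ [j]).filter (· ≠ j) = l := by
    simpa using fun x hx => (hl x hx).ne
  rw [hfilter] at key
  simpa [mul_assoc] using key

theorem mul_descProd_of_mem {X : Finset ι} {x : ι} (hx : x ∈ X) :
    a x * descProd a X = descProd a X := by
  induction X using Finset.induction_on_max with
  | empty => simp at hx
  | insert j Y hY ih =>
    rw [descProd_insert_of_forall_lt a hY]
    rcases Finset.mem_insert.mp hx with rfl | hxY
    · rw [← mul_assoc, h.mul_self]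
    · calc a x * (a j * descProd a Y) = a x * a j * a x * descProd a Y := by
            rw [mul_assoc (a x * a j), ih hxY, mul_assoc]
        _ = a j * descProd a Y := by
            rw [h.mul_mul_self_of_lt (hY x hxY), mul_assoc, ih hxY]

theorem descProd_mul_of_mem {X : Finset ι} {x : ι} (hx : x ∈ X) :
    descProd a X * a x = descProd a X := by
  induction X using Finset.induction_on_max with
  | empty => simp at hx
  | insert j Y hY ih =>
    rw [descProd_insert_of_forall_lt a hY]
    rcases Finset.mem_insert.mp hx with rfl | hxY
    · exact h.mul_prod_map_mul_self (by simpa using hY)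
    · rw [mul_assoc, ih hxY]

theorem prod_map_mul_descProd {X : Finset ι} {l : List ι} (hl : ∀ x ∈ l, x ∈ X) :
    (l.map a).prod * descProd a X = descProd a X := by
  induction l with
  | nil => simp
  | cons x t ih =>
    rw [List.map_cons, List.prod_cons, mul_assoc,
      ih (fun y hy => hl y (List.mem_cons_of_mem x hy)),
      h.mul_descProd_of_mem (hl x List.mem_cons_self)]

theorem descProd_mul_prod_map {X : Finset ι} {l : List ι} (hl : ∀ x ∈ l, x ∈ X) :
    descProd a X * (l.map a).prod = descProd a X := by
  induction l with
  | nil => simp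
  | cons x t ih =>
    rw [List.map_cons, List.prod_cons, ← mul_assoc,
      h.descProd_mul_of_mem (hl x List.mem_cons_self),
      ih (fun y hy => hl y (List.mem_cons_of_mem x hy))]

theorem prod_map_pow_card_eq_descProd {X : Finset ι} {l : List ι} (hl : l.toFinset = X) :
    (l.map a).prod ^ X.card = descProd a X := by
  induction X using Finset.induction_on_max generalizing l with
  | empty => simp [descProd]
  | insert j Y hY ih =>
    have hjY : j ∉ Y := fun hj => lt_irrefl j (hY j hj)
    obtain ⟨u, v, rfl⟩ :=
      List.append_of_mem (List.mem_toFinset.mp (hl ▸ Finset.mem_insert_self j Y))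
    have hcontent (x : ι) : x ∈ u ++ j :: v ↔ x ∈ insert j Y := by
      rw [← hl, List.mem_toFinset]
    have hle : ∀ x ∈ v ++ u, x ≤ j := fun x hx => by
      rcases Finset.mem_insert.mp <| (hcontent x).mp (by simp only [List.mem_append, List.mem_cons] at hx ⊢; tauto) with rfl | hxY
      exacts [le_rfl, (hY x hxY).le]
    obtain ⟨z, hz⟩ : ∃ z, z = (v ++ u).filter (· ≠ j) := ⟨_, rfl⟩
    have hzlt : ∀ x ∈ z, x < j := fun x hx => by
      simp only [hz, List.mem_filter, decide_eq_true_eq] at hx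
      exact lt_of_le_of_ne (hle x hx.1) hx.2
    have hzY : z.toFinset = Y := by
      ext x
      have hxY : x ∈ Y → x ≠ j := fun hx hxj => hjY (hxj ▸ hx)
      have := hcontent x
      simp only [List.mem_append, List.mem_cons, Finset.mem_insert] at this
      simp only [hz, List.mem_toFinset, List.mem_filter, List.mem_append, decide_eq_true_eq]
      tauto
    rw [Finset.card_insert_of_notMem hjY]
    set U := (u.map a).prod
    set V := (v.map a).prod
    calc ((u ++ j :: v).map a).prod ^ (Y.card + 1) = U * (a j * V * U) ^ Y.card * (a j * V) := by
          rw [List.map_append, List.prod_append, List.map_cons, List.prod_cons, pow_succ,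
            ← mul_assoc, mul_pow_mul]
      _ = U * ((a j * (z.map a).prod) ^ Y.card * a j) * V := by
          rw [mul_assoc (a j), ← List.prod_append, ← List.map_append,
            h.mul_prod_map_filter_ne (h.mul_self j) hle, ← hz]
          simp only [mul_assoc]
      _ = U * (a j * descProd a Y * a j) * V := by
          rw [IsIdempotentElem.mul_pow_mul_of_mul_mul_self (h.mul_self j)
            (h.mul_prod_map_mul_self hzlt), ih hzY]
      _ = descProd a (insert j Y) := by
          rw [← descProd_insert_of_forall_lt a hY,
            h.descProd_mul_of_mem (Finset.mem_insert_self j Y),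
            h.prod_map_mul_descProd (fun x hx => (hcontent x).mp (by simp [hx])),
            h.descProd_mul_prod_map (fun x hx => (hcontent x).mp (by simp [hx]))]

theorem prod_map_pow_eq_descProd {l : List ι} {k : ℕ} (hk : l.toFinset.card ≤ k) :
    (l.map a).prod ^ k = descProd a l.toFinset := by
  obtain ⟨t, rfl⟩ := Nat.exists_eq_add_of_le hk
  rw [pow_add, h.prod_map_pow_card_eq_descProd rfl]
  clear hk
  induction t with
  | zero => rw [pow_zero, mul_one]
  | succ t ih =>
    rw [pow_succ, ← mul_assoc, ih, h.descProd_mul_prod_map (fun x => List.mem_toFinset.mpr)]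

end IsKiselmanFamily

theorem isKiselmanFamily_ka (n : ℕ) : IsKiselmanFamily (ka (n := n)) where
  mul_self i := Quotient.sound (ConGen.Rel.of _ _ (KisRel.idem i))
  mul_mul_self_of_lt hij := Quotient.sound (ConGen.Rel.of _ _ (KisRel.braid₁ hij))
  mul_mul_self_of_gt hij := Quotient.sound (ConGen.Rel.of _ _ (KisRel.braid₂ hij))

theorem kmk_eq_lift_ka (n : ℕ) : kmk n = FreeMonoid.lift ka :=
  FreeMonoid.hom_eq fun _ => rfl

theorem eX_eq_descProd {n : ℕ} (X : Finset (Fin n)) : eX X = descProd ka X := by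
  rw [eX, kmk_eq_lift_ka, FreeMonoid.lift_ofList, descProd]

/-- Lemma 3: for a word `w` with content `c(w)`, `w^k = e_{c(w)}` for all
`k ≥ |c(w)|`. -/
theorem kiselman_power_eq_idempotent (n : ℕ) (w : FreeMonoid (Fin n)) (k : ℕ)
    (hk : w.toList.toFinset.card ≤ k) :
    (kmk n w) ^ k = eX w.toList.toFinset := by
  rw [kmk_eq_lift_ka, FreeMonoid.lift_apply, eX_eq_descProd]
  exact (isKiselmanFamily_ka n).prod_map_pow_eq_descProd hk
end

section
/- For subsets X, Y of {1,...,n}, the product e_X e_Y in the Kiselman semigroup K_n is an idempotent if and only if e_X e_Y = e_{X∪Y}, which holds if and only if every i ∈ X∖Y is greater than every j ∈ Y∖X. -/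
/-!
If `m` is the largest element of `X ∪ Y`, then `e_X = a_m e_{X'}` with all letters of `e_{X'}`
below `m`, and the relations give `a_m w a_m = a_m w` for such words `w`; so an `a_m` in `e_Y`
is absorbed and induction on `X ∪ Y` yields `e_X e_Y = e_{X ∪ Y}` under the order condition
(when `m ∉ X`, the condition forces `X ⊆ Y`). Conversely, if `i ∈ X \ Y` and `j ∈ Y \ X` with
`i < j`, collapsing `K_n` onto `a_i, a_j` (all other generators go to `1`) and representing
these by two maps of a three-element set sends `e_X e_Y` to a non-idempotent.
-/

namespace Kiselman

variable {n : ℕ}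

theorem kmk_eq_of_kisRel {a b : FreeMonoid (Fin n)} (h : KisRel n a b) : kmk n a = kmk n b :=
  Quotient.sound (ConGen.Rel.of a b h)

theorem ka_mul_self (i : Fin n) : ka i * ka i = ka i :=
  kmk_eq_of_kisRel (KisRel.idem i)

theorem eX_eq_kmk_sort_ge (X : Finset (Fin n)) :
    eX X = kmk n (FreeMonoid.ofList (X.sort (· ≥ ·))) := by
  rw [eX]
  congr 2
  apply List.Perm.eq_of_pairwise' (r := (· > ·))
  · simpa [List.pairwise_reverse] using X.sortedLT_sort.pairwise
  · exact X.sortedGT_sort.pairwise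
  · exact (List.reverse_perm _).trans ((X.sort_perm_toList _).trans (X.sort_perm_toList _).symm)

@[simp]
theorem eX_empty : eX (∅ : Finset (Fin n)) = 1 := by
  rw [eX_eq_kmk_sort_ge, Finset.sort_empty]
  rfl

theorem eX_insert_of_forall_lt {m : Fin n} {X : Finset (Fin n)} (h : ∀ x ∈ X, x < m) :
    eX (insert m X) = ka m * eX X := by
  rw [eX_eq_kmk_sort_ge, eX_eq_kmk_sort_ge,
    Finset.sort_insert _ (fun x hx => (h x hx).le) (fun hm => lt_irrefl m (h m hm))]
  rfl

theorem eX_eq_ka_mul_eX_erase {m : Fin n} {X : Finset (Fin n)} (hm : m ∈ X)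
    (h : ∀ x ∈ X, x ≤ m) : eX X = ka m * eX (X.erase m) := by
  conv_lhs => rw [← Finset.insert_erase hm]
  exact eX_insert_of_forall_lt fun x hx => (h x (Finset.mem_of_mem_erase hx)).lt_of_ne
    (Finset.ne_of_mem_erase hx)

theorem ka_mul_eX_of_mem {x : Fin n} {Y : Finset (Fin n)} (hx : x ∈ Y) : ka x * eX Y = eX Y := by
  induction Y using Finset.induction_on_max with
  | empty => simp at hx
  | insert m S hS ih =>
    rw [eX_insert_of_forall_lt hS]
    rcases Finset.mem_insert.mp hx with rfl | hxS
    · rw [← mul_assoc, ka_mul_self]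
    · calc ka x * (ka m * eX S) = ka x * ka m * ka x * eX S := by
            rw [mul_assoc (ka x * ka m), ih hxS, mul_assoc]
        _ = ka m * eX S := by rw [ka_mul_ka_mul_ka_of_lt (hS x hxS), mul_assoc, ih hxS]

theorem ka_mul_eX_mul_ka_of_forall_lt {m : Fin n} {X : Finset (Fin n)} (h : ∀ x ∈ X, x < m) :
    ka m * eX X * ka m = ka m * eX X := by
  induction X using Finset.induction_on_max with
  | empty => simp [ka_mul_self]
  | insert k S hS ih =>
    have hkm : k < m := h k (Finset.mem_insert_self k S)
    have ih := ih fun x hx => h x (Finset.mem_insert_of_mem hx)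
    have absorb : ka m * ka k = ka m * ka k * ka m := (ka_mul_ka_mul_ka_of_gt hkm).symm
    calc ka m * eX (insert k S) * ka m = ka m * ka k * (eX S * ka m) := by
          rw [eX_insert_of_forall_lt hS]; simp only [mul_assoc]
      _ = ka m * ka k * (ka m * eX S * ka m) := by nth_rw 1 [absorb]; simp only [mul_assoc]
      _ = ka m * ka k * ka m * eX S := by rw [ih, mul_assoc (ka m * ka k)]
      _ = ka m * eX (insert k S) := by rw [← absorb, eX_insert_of_forall_lt hS, mul_assoc]

theorem eX_mul_eX_of_subset {X Y : Finset (Fin n)} (h : X ⊆ Y) : eX X * eX Y = eX Y := by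
  induction X using Finset.induction_on_max with
  | empty => simp
  | insert m S hS ih =>
    have hS' : S ⊆ Y := (Finset.subset_insert m S).trans h
    rw [eX_insert_of_forall_lt hS, mul_assoc, ih hS',
      ka_mul_eX_of_mem (h (Finset.mem_insert_self m S))]

theorem isIdempotentElem_eX (X : Finset (Fin n)) : IsIdempotentElem (eX X) :=
  eX_mul_eX_of_subset subset_rfl

theorem ka_mul_eX_mul_eX_erase {m : Fin n} {X Y : Finset (Fin n)} (hX : ∀ x ∈ X, x < m)
    (hY : ∀ y ∈ Y, y ≤ m) : ka m * eX X * eX Y = ka m * eX X * eX (Y.erase m) := by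
  by_cases hm : m ∈ Y
  · rw [eX_eq_ka_mul_eX_erase hm hY, ← mul_assoc, ka_mul_eX_mul_ka_of_forall_lt hX]
  · rw [Finset.erase_eq_of_notMem hm]

theorem eX_mul_eX_of_forall_sdiff_lt {X Y : Finset (Fin n)}
    (h : ∀ i ∈ X \ Y, ∀ j ∈ Y \ X, j < i) : eX X * eX Y = eX (X ∪ Y) := by
  suffices ∀ U, ∀ X Y : Finset (Fin n), X ∪ Y = U → (∀ i ∈ X \ Y, ∀ j ∈ Y \ X, j < i) →
      eX X * eX Y = eX U from this _ X Y rfl h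
  intro U
  induction U using Finset.induction_on_max with
  | empty =>
    intro X Y hU _
    obtain ⟨rfl, rfl⟩ := Finset.union_eq_empty.mp hU
    simp
  | insert m S hS ih =>
    intro X Y hU h
    have hle : ∀ x ∈ X ∪ Y, x ≤ m := by
      rw [hU]
      exact fun x hx => (Finset.mem_insert.mp hx).elim le_of_eq fun hx => (hS x hx).le
    by_cases hmX : m ∈ X
    · have hX : ∀ x ∈ X.erase m, x < m := fun x hx =>
        (hle x (Finset.mem_union_left _ (Finset.mem_of_mem_erase hx))).lt_of_ne
          (Finset.ne_of_mem_erase hx)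
      have hU' : X.erase m ∪ Y.erase m = S := by
        rw [← Finset.erase_union_distrib, hU, Finset.erase_insert fun hm => lt_irrefl m (hS m hm)]
      have h' : ∀ i ∈ X.erase m \ Y.erase m, ∀ j ∈ Y.erase m \ X.erase m, j < i := by
        simp only [← Finset.erase_sdiff_distrib]
        exact fun i hi j hj => h i (Finset.mem_of_mem_erase hi) j (Finset.mem_of_mem_erase hj)
      calc eX X * eX Y = ka m * eX (X.erase m) * eX Y := by
            rw [eX_eq_ka_mul_eX_erase hmX fun x hx => hle x (Finset.mem_union_left _ hx)]
        _ = ka m * eX (X.erase m) * eX (Y.erase m) :=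
            ka_mul_eX_mul_eX_erase hX fun y hy => hle y (Finset.mem_union_right _ hy)
        _ = eX (insert m S) := by rw [mul_assoc, ih _ _ hU' h', eX_insert_of_forall_lt hS]
    · -- `m ∈ Y \ X` exceeds everything, so nothing lies in `X \ Y`.
      have hmY : m ∈ Y \ X := Finset.mem_sdiff.mpr
        ⟨(Finset.mem_union.mp (hU ▸ Finset.mem_insert_self m S)).resolve_left hmX, hmX⟩
      have hXY : X ⊆ Y := fun i hi => by
        by_contra hiY
        exact (h i (Finset.mem_sdiff.mpr ⟨hi, hiY⟩) m hmY).not_ge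
          (hle i (Finset.mem_union_left _ hi))
      rw [← hU, Finset.union_eq_right.mpr hXY]
      exact eX_mul_eX_of_subset hXY

section Representation

variable {M : Type*} [Monoid M]

theorem map_eX (φ : Kiselman n →* M) (X : Finset (Fin n)) :
    φ (eX X) = ((X.sort (· ≥ ·)).map (φ ∘ ka)).prod := by
  have : φ.comp (kmk n) = FreeMonoid.lift (φ ∘ ka) := FreeMonoid.hom_eq fun _ => rfl
  rw [eX_eq_kmk_sort_ge, ← MonoidHom.comp_apply, this, FreeMonoid.lift_apply]
  rfl

theorem map_eX_of_mem (φ : Kiselman n →* M) {a : Fin n} {X : Finset (Fin n)} (ha : a ∈ X)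
    (h : ∀ x ∈ X, x ≠ a → φ (ka x) = 1) : φ (eX X) = φ (ka a) := by
  rw [map_eX,
    List.prod_map_eq_pow_single a (φ ∘ ka) fun x hxa hx => h x (Finset.mem_sort _ |>.mp hx) hxa,
    List.count_eq_one_of_mem (Finset.sort_nodup _ _) (Finset.mem_sort _ |>.mpr ha), pow_one]
  rfl

def collapse (i j : Fin n) (p q : M) (k : Fin n) : M :=
  if k = i then p else if k = j then q else 1

theorem lift_collapse_eq_of_kisRel {i j : Fin n} (hij : i < j) {p q : M}
    (hp : IsIdempotentElem p) (hq : IsIdempotentElem q) (hpqp : p * q * p = q * p)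
    (hqpq : q * p * q = q * p)
    (a b : FreeMonoid (Fin n)) (h : KisRel n a b) :
    FreeMonoid.lift (collapse i j p q) a = FreeMonoid.lift (collapse i j p q) b := by
  rcases h with k | @⟨k, l, hkl⟩ | @⟨k, l, hkl⟩ <;>
    simp only [map_mul, FreeMonoid.lift_eval_of, collapse]
  · split_ifs <;> simp [hp.eq, hq.eq]
  all_goals split_ifs <;> subst_vars <;> simp_all [hp.eq, hq.eq, mul_assoc, lt_asymm hij]

section Collapse

variable {i j : Fin n} (hij : i < j) {p q : M} (hp : IsIdempotentElem p)
  (hq : IsIdempotentElem q) (hpqp : p * q * p = q * p) (hqpq : q * p * q = q * p)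

def collapseHom : Kiselman n →* M :=
  PresentedMonoid.lift (collapse i j p q) (lift_collapse_eq_of_kisRel hij hp hq hpqp hqpq)

theorem collapseHom_ka (k : Fin n) :
    collapseHom hij hp hq hpqp hqpq (ka k) = collapse i j p q k :=
  PresentedMonoid.lift_of _ _

theorem collapseHom_eX_of_mem_of_notMem {X : Finset (Fin n)} (hi : i ∈ X) (hj : j ∉ X) :
    collapseHom hij hp hq hpqp hqpq (eX X) = p := by
  rw [map_eX_of_mem _ hi fun x hx hxi => ?_, collapseHom_ka, collapse, if_pos rfl]
  rw [collapseHom_ka, collapse, if_neg hxi, if_neg (ne_of_mem_of_not_mem hx hj)]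

theorem collapseHom_eX_of_notMem_of_mem {Y : Finset (Fin n)} (hi : i ∉ Y) (hj : j ∈ Y) :
    collapseHom hij hp hq hpqp hqpq (eX Y) = q := by
  rw [map_eX_of_mem _ hj fun y hy hyj => ?_, collapseHom_ka, collapse, if_neg hij.ne', if_pos rfl]
  rw [collapseHom_ka, collapse, if_neg (ne_of_mem_of_not_mem hy hi), if_neg hyj]

end Collapse

end Representation

/- Two transformations of `{0, 1, 2}` satisfying the relations of `K_2` for `a₁ ↦ endA`,
`a₂ ↦ endB`, whose product is not idempotent. -/
def endA : Function.End (Fin 3) := ![0, 0, 2]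

def endB : Function.End (Fin 3) := ![2, 1, 2]

theorem lt_of_isIdempotentElem_eX_mul_eX {X Y : Finset (Fin n)}
    (h : IsIdempotentElem (eX X * eX Y)) {i j : Fin n} (hi : i ∈ X \ Y) (hj : j ∈ Y \ X) :
    j < i := by
  rw [Finset.mem_sdiff] at hi hj
  by_contra! hji
  have hij : i < j := hji.lt_of_ne (ne_of_mem_of_not_mem hi.1 hj.2)
  have hA : IsIdempotentElem endA := by funext x; fin_cases x <;> rfl
  have hB : IsIdempotentElem endB := by funext x; fin_cases x <;> rfl
  have hABA : endA * endB * endA = endB * endA := by funext x; fin_cases x <;> rfl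
  have hBAB : endB * endA * endB = endB * endA := by funext x; fin_cases x <;> rfl
  have := congrArg (collapseHom hij hA hB hABA hBAB) h
  rw [map_mul, map_mul, collapseHom_eX_of_mem_of_notMem _ _ _ _ _ hi.1 hj.2,
    collapseHom_eX_of_notMem_of_mem _ _ _ _ _ hi.2 hj.1] at this
  exact absurd (congrFun this 1) (by decide)

end Kiselman

/-- Proposition: `e_X e_Y` is idempotent iff `e_X e_Y = e_{X ∪ Y}` iff every
`i ∈ X∖Y` is greater than every `j ∈ Y∖X`. -/
theorem kiselman_product_of_idempotents (n : ℕ) (X Y : Finset (Fin n)) :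
    (IsIdempotentElem (eX X * eX Y) ↔ eX X * eX Y = eX (X ∪ Y)) ∧
    (IsIdempotentElem (eX X * eX Y) ↔ ∀ i ∈ X \ Y, ∀ j ∈ Y \ X, j < i) := by
  have idem_of_eq (h : eX X * eX Y = eX (X ∪ Y)) : IsIdempotentElem (eX X * eX Y) :=
    h ▸ Kiselman.isIdempotentElem_eX (X ∪ Y)
  have lt_of_idem (h : IsIdempotentElem (eX X * eX Y)) : ∀ i ∈ X \ Y, ∀ j ∈ Y \ X, j < i :=
    fun _ hi _ hj => Kiselman.lt_of_isIdempotentElem_eX_mul_eX h hi hj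
  exact ⟨⟨fun h => Kiselman.eX_mul_eX_of_forall_sdiff_lt (lt_of_idem h), idem_of_eq⟩,
    ⟨lt_of_idem, fun h => idem_of_eq (Kiselman.eX_mul_eX_of_forall_sdiff_lt h)⟩⟩
end

section
/- All maximal subgroups of the Kiselman semigroup K_n are trivial: if f is an idempotent of K_n and x belongs to the maximal subgroup with identity f, then x = f. -/
namespace KisAux

variable {n : ℕ}

/-- The image in `K_n` of a word given as a list. -/
def W (l : List (Fin n)) : Kiselman n := kmk n (FreeMonoid.ofList l)

lemma W_nil : W ([] : List (Fin n)) = 1 := map_one (kmk n)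

lemma W_append (l1 l2 : List (Fin n)) : W (l1 ++ l2) = W l1 * W l2 := by
  unfold W
  rw [FreeMonoid.ofList_append, map_mul]

lemma ka_eq (i : Fin n) : ka i = kmk n (FreeMonoid.of i) := rfl

lemma W_cons (i : Fin n) (l : List (Fin n)) : W (i :: l) = ka i * W l := by
  unfold W
  rw [FreeMonoid.ofList_cons, map_mul, ka_eq]

lemma W_singleton (i : Fin n) : W [i] = ka i := by
  rw [W_cons, W_nil, mul_one]

lemma krel {w1 w2 : FreeMonoid (Fin n)} (h : KisRel n w1 w2) : kmk n w1 = kmk n w2 :=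
  Quotient.sound (ConGen.Rel.of _ _ h)

lemma ka_idem (i : Fin n) : ka i * ka i = ka i := by
  exact krel (KisRel.idem i)

lemma ka_braid2 {i j : Fin n} (h : i < j) : ka j * ka i * ka j = ka j * ka i := by
  exact krel (KisRel.braid₂ h)

/-- Lemma A: if all letters of `U` are `< t`, then `a_t U a_t = a_t U`. -/
lemma collapseA (t : Fin n) (U : List (Fin n)) (hU : ∀ i ∈ U, i < t) :
    ka t * W U * ka t = ka t * W U := by
  induction U using List.reverseRecOn with
  | nil => simpa [W_nil] using ka_idem t
  | append_singleton U i ih =>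
    have hi : i < t := hU i (by simp)
    have ih' := ih (fun j hj => hU j (by simp [hj]))
    rw [W_append, W_singleton]
    calc ka t * (W U * ka i) * ka t
        = (ka t * W U * ka t) * (ka i * ka t) := by rw [ih']; simp only [mul_assoc]
      _ = (ka t * W U) * (ka t * ka i * ka t) := by simp only [mul_assoc]
      _ = (ka t * W U) * (ka t * ka i) := by rw [ka_braid2 hi]
      _ = (ka t * W U * ka t) * ka i := by simp only [mul_assoc]
      _ = (ka t * W U) * ka i := by rw [ih']
      _ = ka t * (W U * ka i) := by simp only [mul_assoc]

/-- Deletion of the letter `t` from a word. -/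
def del (t : Fin n) : List (Fin n) → List (Fin n)
  | [] => []
  | i :: l => if i = t then del t l else i :: del t l

lemma del_nil (t : Fin n) : del t [] = [] := rfl

lemma del_cons_self (t : Fin n) (l : List (Fin n)) : del t (t :: l) = del t l := by
  simp [del]

lemma del_cons_ne {t i : Fin n} (h : i ≠ t) (l : List (Fin n)) :
    del t (i :: l) = i :: del t l := by
  simp [del, h]

lemma del_append (t : Fin n) (l1 l2 : List (Fin n)) :
    del t (l1 ++ l2) = del t l1 ++ del t l2 := by
  induction l1 with
  | nil => rfl
  | cons a l ih =>
    by_cases h : a = t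
    · subst h; simp [del_cons_self, ih]
    · simp [del_cons_ne h, ih]

lemma mem_del {t i : Fin n} {l : List (Fin n)} (h : i ∈ del t l) : i ∈ l ∧ i ≠ t := by
  induction l with
  | nil => simp [del] at h
  | cons a l ih =>
    by_cases ha : a = t
    · subst ha
      rw [del_cons_self] at h
      obtain ⟨h1, h2⟩ := ih h
      exact ⟨List.mem_cons_of_mem _ h1, h2⟩
    · rw [del_cons_ne ha] at h
      rcases List.mem_cons.mp h with h | h
      · exact ⟨by simp [h], h ▸ ha⟩
      · obtain ⟨h1, h2⟩ := ih h
        exact ⟨List.mem_cons_of_mem _ h1, h2⟩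

lemma del_eq_self {t : Fin n} {l : List (Fin n)} (h : ∀ i ∈ l, i ≠ t) : del t l = l := by
  induction l with
  | nil => rfl
  | cons a l ih =>
    rw [del_cons_ne (h a (by simp)), ih (fun i hi => h i (by simp [hi]))]

lemma del_del (t : Fin n) (l : List (Fin n)) : del t (del t l) = del t l :=
  del_eq_self (fun i hi => (mem_del hi).2)

/-- Lemma C': collapsing all occurrences of the maximal letter. -/
lemma collapseC' (t : Fin n) :
    ∀ (v : List (Fin n)), (∀ i ∈ v, i ≤ t) → ∀ (u : List (Fin n)), (∀ i ∈ u, i < t) →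
      ka t * W u * W v = ka t * W u * W (del t v) := by
  intro v
  induction v with
  | nil => intro _ u _; rfl
  | cons i v ih =>
    intro hv u hu
    have hv' : ∀ j ∈ v, j ≤ t := fun j hj => hv j (by simp [hj])
    by_cases hit : i = t
    · subst hit
      rw [del_cons_self, W_cons]
      calc ka i * W u * (ka i * W v)
          = (ka i * W u * ka i) * W v := by simp only [mul_assoc]
        _ = (ka i * W u) * W v := by rw [collapseA i u hu]
        _ = ka i * W u * W (del i v) := ih hv' u hu
    · have hi : i < t := lt_of_le_of_ne (hv i (by simp)) hit
      have hu' : ∀ j ∈ u ++ [i], j < t := by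
        intro j hj
        rcases List.mem_append.mp hj with h | h
        · exact hu j h
        · simp at h; subst h; exact hi
      rw [del_cons_ne hit, W_cons, W_cons]
      calc ka t * W u * (ka i * W v)
          = (ka t * (W u * ka i)) * W v := by simp only [mul_assoc]
        _ = ka t * W (u ++ [i]) * W v := by rw [W_append, W_singleton]
        _ = ka t * W (u ++ [i]) * W (del t v) := ih hv' (u ++ [i]) hu'
        _ = (ka t * (W u * ka i)) * W (del t v) := by rw [W_append, W_singleton]
        _ = ka t * W u * (ka i * W (del t v)) := by simp only [mul_assoc]

/-- Lemma C: `a_t z = a_t (δ_t z)` whenever all letters of `z` are `≤ t`. -/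
lemma collapseC (t : Fin n) (v : List (Fin n)) (hv : ∀ i ∈ v, i ≤ t) :
    ka t * W v = ka t * W (del t v) := by
  have := collapseC' t v hv [] (by simp)
  simpa [W_nil, mul_one] using this

lemma collapseHead (t : Fin n) {z1 z2 : List (Fin n)} (h1 : ∀ i ∈ z1, i ≤ t)
    (h2 : ∀ i ∈ z2, i ≤ t) (h : del t z1 = del t z2) :
    ka t * W z1 = ka t * W z2 := by
  rw [collapseC t z1 h1, collapseC t z2 h2, h]

lemma W_three (u s : List (Fin n)) (t : Fin n) :
    W u * ka t * W s = W (u ++ t :: s) := by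
  rw [W_append, W_cons, mul_assoc]

/-- The power formula: if `w = u a_t v` with letters of `u` strictly below `t`
and letters of `v` at most `t`, then `w^(M+1) = u a_t (δ v) (u (δ v))^M`. -/
lemma pow_formula (t : Fin n) (u v : List (Fin n)) (hu : ∀ i ∈ u, i < t)
    (hv : ∀ i ∈ v, i ≤ t) (M : ℕ) :
    (W (u ++ t :: v)) ^ (M + 1) =
      W u * ka t * W (del t v) * (W (u ++ del t v)) ^ M := by
  have hu_ne : ∀ i ∈ u, i ≠ t := fun i hi => ne_of_lt (hu i hi)
  have hdv_ne : ∀ i ∈ del t v, i ≠ t := fun i hi => (mem_del hi).2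
  have hdv_le : ∀ i ∈ del t v, i ≤ t := fun i hi => hv i (mem_del hi).1
  induction M with
  | zero =>
    rw [pow_one, pow_zero, mul_one, W_append, W_cons, collapseC t v hv, ← mul_assoc]
  | succ M ih =>
    have core : W (u ++ t :: v) * (W u * ka t * W (del t v)) =
        (W u * ka t * W (del t v)) * W (u ++ del t v) := by
      rw [W_three u (del t v) t]
      rw [show W (u ++ t :: v) * W (u ++ t :: del t v)
            = W ((u ++ t :: v) ++ (u ++ t :: del t v)) from (W_append _ _).symm]
      rw [show W (u ++ t :: del t v) * W (u ++ del t v)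
            = W ((u ++ t :: del t v) ++ (u ++ del t v)) from (W_append _ _).symm]
      rw [show (u ++ t :: v) ++ (u ++ t :: del t v) = u ++ t :: (v ++ (u ++ t :: del t v)) by
            simp]
      rw [show (u ++ t :: del t v) ++ (u ++ del t v) = u ++ t :: (del t v ++ (u ++ del t v)) by
            simp]
      rw [W_append, W_append, W_cons, W_cons]
      congr 1
      apply collapseHead
      · intro i hi
        simp only [List.mem_append] at hi
        rcases hi with h | h | h
        · exact hv i h
        · exact le_of_lt (hu i h)
        · rcases List.mem_cons.mp h with h | h
          · exact le_of_eq h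
          · exact hdv_le i h
      · intro i hi
        simp only [List.mem_append] at hi
        rcases hi with h | h | h
        · exact hdv_le i h
        · exact le_of_lt (hu i h)
        · exact hdv_le i h
      · simp only [del_append, del_cons_self, del_del, del_eq_self hu_ne,
            del_eq_self hdv_ne]
    calc (W (u ++ t :: v)) ^ (M + 1 + 1)
        = W (u ++ t :: v) * (W (u ++ t :: v)) ^ (M + 1) := by rw [pow_succ']
      _ = W (u ++ t :: v) * (W u * ka t * W (del t v) * (W (u ++ del t v)) ^ M) := by rw [ih]
      _ = (W (u ++ t :: v) * (W u * ka t * W (del t v))) * (W (u ++ del t v)) ^ M := by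
          simp only [mul_assoc]
      _ = ((W u * ka t * W (del t v)) * W (u ++ del t v)) * (W (u ++ del t v)) ^ M := by
          rw [core]
      _ = W u * ka t * W (del t v) * (W (u ++ del t v)) ^ (M + 1) := by
          simp only [mul_assoc, ← pow_succ']

lemma split_first {t : Fin n} {w : List (Fin n)} (ht : t ∈ w) :
    ∃ u v, w = u ++ t :: v ∧ t ∉ u := by
  induction w with
  | nil => simp at ht
  | cons a w ih =>
    by_cases h : a = t
    · exact ⟨[], w, by rw [h]; rfl, by simp⟩
    · have ht' : t ∈ w := by
        rcases List.mem_cons.mp ht with h' | h'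
        · exact absurd h'.symm h
        · exact h'
      obtain ⟨u, v, rfl, hu⟩ := ih ht'
      exact ⟨a :: u, v, rfl, by
        simp only [List.mem_cons, not_or]
        exact ⟨fun hh => h hh.symm, hu⟩⟩

/-- Aperiodicity of `K_n` at the level of words. -/
lemma exists_pow_eq_word : ∀ (k : ℕ) (w : List (Fin n)), w.toFinset.card ≤ k →
    ∃ m, (W w) ^ (m + 1) = (W w) ^ m := by
  intro k
  induction k with
  | zero =>
    intro w hw
    have : w.toFinset = ∅ := Finset.card_eq_zero.mp (Nat.le_zero.mp hw)
    have hnil : w = [] := by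
      cases w with
      | nil => rfl
      | cons a w => simp at this
    subst hnil
    exact ⟨0, by simp [W_nil]⟩
  | succ k ih =>
    intro w hw
    cases w with
    | nil => exact ⟨0, by simp [W_nil]⟩
    | cons a w0 =>
      set w := a :: w0 with hwdef
      have hne : w.toFinset.Nonempty := ⟨a, by simp [hwdef]⟩
      set t := w.toFinset.max' hne with htdef
      have ht_mem : t ∈ w := List.mem_toFinset.mp (Finset.max'_mem _ hne)
      have hle : ∀ i ∈ w, i ≤ t := fun i hi =>
        Finset.le_max' _ i (List.mem_toFinset.mpr hi)
      obtain ⟨u, v, hsplit, hu_not⟩ := split_first ht_mem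
      have hu : ∀ i ∈ u, i < t := by
        intro i hi
        have hle' : i ≤ t := hle i (by rw [hsplit]; exact List.mem_append_left _ hi)
        refine lt_of_le_of_ne hle' (fun h => ?_)
        exact hu_not (h ▸ hi)
      have hv : ∀ i ∈ v, i ≤ t := by
        intro i hi
        exact hle i (by rw [hsplit]; exact List.mem_append_right _ (List.mem_cons_of_mem _ hi))
      set q := u ++ del t v with hqdef
      have hq_sub : q.toFinset ⊆ w.toFinset.erase t := by
        intro i hi
        rw [List.mem_toFinset] at hi
        rw [Finset.mem_erase, List.mem_toFinset]
        rcases List.mem_append.mp hi with h | h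
        · exact ⟨ne_of_lt (hu i h), by rw [hsplit]; exact List.mem_append_left _ h⟩
        · obtain ⟨h1, h2⟩ := mem_del h
          exact ⟨h2, by rw [hsplit]; exact List.mem_append_right _ (List.mem_cons_of_mem _ h1)⟩
      have hq_card : q.toFinset.card ≤ k := by
        have h1 : q.toFinset.card ≤ (w.toFinset.erase t).card := Finset.card_le_card hq_sub
        have h2 : (w.toFinset.erase t).card = w.toFinset.card - 1 :=
          Finset.card_erase_of_mem (Finset.max'_mem _ hne)
        omega
      obtain ⟨m, hm⟩ := ih q hq_card
      refine ⟨m + 1, ?_⟩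
      rw [hsplit, pow_formula t u v hu hv (m + 1), pow_formula t u v hu hv m, ← hqdef, hm]

/-- Aperiodicity of `K_n`. -/
lemma exists_pow_eq (z : Kiselman n) : ∃ m, z ^ (m + 1) = z ^ m := by
  obtain ⟨a, rfl⟩ := PresentedMonoid.surjective_mk (rels := KisRel n) z
  exact exists_pow_eq_word a.toList.toFinset.card a.toList le_rfl

end KisAux

/-- Corollary 2: all maximal subgroups of `K_n` are trivial: if `f` is idempotent and
`x` is a unit of `f K_n f` (with identity `f`), then `x = f`. -/
theorem kiselman_maximal_subgroups_trivial (n : ℕ) (f x y : Kiselman n)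
    (hf : IsIdempotentElem f)
    (hxf : f * x = x) (hfx : x * f = x)
    (hyf : f * y = y) (hfy : y * f = y)
    (hxy : x * y = f) (hyx : y * x = f) :
    x = f := by
  have key : ∀ m : ℕ, x ^ (m + 1) * y ^ (m + 1) = f := by
    intro m
    induction m with
    | zero => simpa using hxy
    | succ m ih =>
      have hfy' : f * y ^ (m + 1) = y ^ (m + 1) := by
        rw [pow_succ' y m, ← mul_assoc, hyf]
      calc x ^ (m + 1 + 1) * y ^ (m + 1 + 1)
          = (x ^ (m + 1) * x) * (y * y ^ (m + 1)) := by
            rw [pow_succ x (m + 1), pow_succ' y (m + 1)]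
        _ = x ^ (m + 1) * ((x * y) * y ^ (m + 1)) := by simp only [mul_assoc]
        _ = x ^ (m + 1) * (f * y ^ (m + 1)) := by rw [hxy]
        _ = x ^ (m + 1) * y ^ (m + 1) := by rw [hfy']
        _ = f := ih
  obtain ⟨m, hm⟩ := KisAux.exists_pow_eq x
  have h1 := key (m + 1)
  have h2 : x ^ (m + 1 + 1) = x ^ (m + 1) := by
    calc x ^ (m + 1 + 1) = x ^ (m + 1) * x := pow_succ x (m + 1)
      _ = x ^ m * x := by rw [hm]
      _ = x ^ (m + 1) := (pow_succ x m).symm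
  rw [h2, pow_succ y (m + 1), ← mul_assoc, key m, hyf] at h1
  calc x = x * f := hfx.symm
    _ = x * y := by rw [h1]
    _ = f := hxy
end

section
/- The assignment a_i ↦ A_{n−i+1} extends uniquely to a monoid homomorphism ψ_n from the Kiselman semigroup K_n to n×n integer matrices, where A_i is the matrix equal to the identity except that its i-th row is zero and its i-th column is (1,...,1,0,...,0)^t with the first i−1 entries equal to 1. Moreover ψ_n maps the zero element e_{{1,...,n}} to the zero matrix. -/
/-- The matrix `A_i` (0-indexed: `Amat n i` is the paper's `A_{i+1}`): the identity
matrix except that row `i` is zero and column `i` is `(1,…,1,0,…,0)ᵗ` with ones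
exactly in the rows `< i`. -/
def Amat (n : ℕ) (i : Fin n) : Matrix (Fin n) (Fin n) ℤ := fun r c =>
  if r = i then 0 else if c = i then (if r < i then 1 else 0) else if r = c then 1 else 0

/-
Left multiplication by `Amat n u` is the row operation "add row `u` to every row above it, then
clear row `u`"; right multiplication by it replaces column `u` by the sum of the columns before
it. The Kiselman relations for the matrices follow: the first description shows that `Amat n u`
fixes every matrix whose row `u` vanishes (idempotency, and `A_j A_i A_j = A_i A_j` for `i < j`,
since `A_i` does not touch row `j`), the second that `A_i A_j` agrees with `A_i` outside column
`j`, which with idempotency gives `A_i A_j A_i = A_i A_j`. By von Dyck's theorem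
`aᵢ ↦ A_{n-i+1}` then defines a homomorphism, unique because the `aᵢ` generate. Finally
`e_{1,…,n} = aₙ ⋯ a₁` is sent to `A_1 ⋯ A_n`, and by the column description the prefix product
`A_1 ⋯ A_k` is the identity with its first `k` columns cleared.
-/

section AmatAlgebra

variable {n : ℕ}

lemma Amat_mul_apply (u : Fin n) (M : Matrix (Fin n) (Fin n) ℤ) (r c : Fin n) :
    (Amat n u * M) r c = if r = u then 0 else (if r < u then M u c else 0) + M r c := by
  rw [Matrix.mul_apply]
  by_cases hr : r = u
  · simp [hr, Amat]
  · have key : ∀ j : Fin n, Amat n u r j * M j c =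
        (if j = u then (if r < u then M j c else 0) else 0) + (if j = r then M j c else 0) := by
      intro j
      by_cases hju : j = u <;> by_cases hjr : j = r <;> simp_all [Amat, eq_comm]
    rw [Finset.sum_congr rfl (fun j _ => key j), Finset.sum_add_distrib]
    simp [hr, Finset.sum_ite_eq']

lemma Amat_mul_apply_of_lt {u r : Fin n} (h : u < r) (M : Matrix (Fin n) (Fin n) ℤ) (c : Fin n) :
    (Amat n u * M) r c = M r c := by
  simp [Amat_mul_apply, h.ne', h.not_gt]

lemma Amat_mul_eq_self {u : Fin n} {M : Matrix (Fin n) (Fin n) ℤ} (h : ∀ c, M u c = 0) :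
    Amat n u * M = M := by
  ext r c
  by_cases hr : r = u <;> simp [Amat_mul_apply, hr, h]

lemma Amat_apply_of_col_ne {u c : Fin n} (hc : c ≠ u) (r : Fin n) :
    Amat n u r c = (1 : Matrix (Fin n) (Fin n) ℤ) r c := by
  by_cases hr : r = u
  · subst hr; simp [Amat, Ne.symm hc]
  · simp [Amat, Matrix.one_apply, hr, hc]

lemma mul_Amat_apply_of_ne {u c : Fin n} (hc : c ≠ u) (M : Matrix (Fin n) (Fin n) ℤ)
    (r : Fin n) :
    (M * Amat n u) r c = M r c := by
  simp [Matrix.mul_apply, Amat_apply_of_col_ne hc, Matrix.one_apply]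

lemma mul_Amat_apply_self (u : Fin n) (M : Matrix (Fin n) (Fin n) ℤ) (r : Fin n) :
    (M * Amat n u) r u = ∑ j ∈ Finset.Iio u, M r j := by
  have col_self : ∀ j, Amat n u j u = if j < u then 1 else 0 := by
    intro j
    by_cases hj : j = u <;> simp [Amat, hj]
  simp only [Matrix.mul_apply, col_self, mul_ite, mul_one, mul_zero]
  rw [← Finset.sum_filter, Finset.filter_gt_eq_Iio]

lemma Amat_mul_self (u : Fin n) : Amat n u * Amat n u = Amat n u :=
  Amat_mul_eq_self fun c => by simp [Amat]

lemma Amat_sandwich_of_gt {i j : Fin n} (h : i < j) :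
    Amat n j * (Amat n i * Amat n j) = Amat n i * Amat n j :=
  Amat_mul_eq_self fun c => by rw [Amat_mul_apply_of_lt h]; simp [Amat]

lemma Amat_sandwich_of_lt {i j : Fin n} (h : i < j) :
    Amat n i * (Amat n j * Amat n i) = Amat n i * Amat n j := by
  rw [← mul_assoc]
  ext r c
  by_cases hc : c = i
  · subst hc
    have col_lt : ∀ k ∈ Finset.Iio c, (Amat n c * Amat n j) r k = Amat n c r k :=
      fun k hk => mul_Amat_apply_of_ne ((Finset.mem_Iio.1 hk).trans h).ne _ _
    rw [mul_Amat_apply_self, Finset.sum_congr rfl col_lt, ← mul_Amat_apply_self, Amat_mul_self,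
      mul_Amat_apply_of_ne h.ne]
  · exact mul_Amat_apply_of_ne hc _ _

lemma prod_ofFn_Amat_castLE {k : ℕ} (hk : k ≤ n) :
    (List.ofFn fun i : Fin k => Amat n (Fin.castLE hk i)).prod =
      Matrix.diagonal fun r : Fin n => if k ≤ (r : ℕ) then 1 else 0 := by
  induction k with
  | zero => simp [Matrix.diagonal_one]
  | succ k ih =>
    rw [List.ofFn_succ', List.prod_concat]
    simp only [Fin.castLE_castSucc]
    rw [ih (Nat.le_of_succ_le hk), show Fin.castLE hk (Fin.last k) = ⟨k, hk⟩ from rfl]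
    ext r c
    by_cases hc : c = ⟨k, hk⟩
    · subst hc
      rw [mul_Amat_apply_self, Finset.sum_eq_zero fun j hj => ?_]
      · simp [Matrix.diagonal_apply, Fin.ext_iff]
        omega
      · have hjk : (j : ℕ) < k := Fin.lt_def.1 (Finset.mem_Iio.1 hj)
        simp [Matrix.diagonal_apply]
        omega
    · have hck : (c : ℕ) ≠ k := fun h => hc (Fin.ext h)
      rw [mul_Amat_apply_of_ne hc]
      simp [Matrix.diagonal_apply]
      omega

lemma prod_ofFn_Amat : (List.ofFn (Amat n)).prod = 0 := by
  have h := prod_ofFn_Amat_castLE (le_refl n)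
  simp only [Fin.castLE_refl] at h
  rw [h, ← Matrix.diagonal_zero]
  congr
  ext r
  simp [r.is_lt]

end AmatAlgebra

lemma KisRel.lift_Amat_rev_eq (n : ℕ) (a b : FreeMonoid (Fin n)) (h : KisRel n a b) :
    FreeMonoid.lift (fun i : Fin n => Amat n i.rev) a =
      FreeMonoid.lift (fun i : Fin n => Amat n i.rev) b := by
  cases h with
  | idem i => simpa using Amat_mul_self i.rev
  | braid₁ h => simpa [mul_assoc] using Amat_sandwich_of_gt (Fin.rev_lt_rev.2 h)
  | braid₂ h => simpa [mul_assoc] using Amat_sandwich_of_lt (Fin.rev_lt_rev.2 h)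

namespace Kiselman

def matrixRep (n : ℕ) : Kiselman n →* Matrix (Fin n) (Fin n) ℤ :=
  PresentedMonoid.lift _ (KisRel.lift_Amat_rev_eq n)

lemma eq_matrixRep {n : ℕ} {ψ : Kiselman n →* Matrix (Fin n) (Fin n) ℤ}
    (h : ∀ i, ψ (ka i) = Amat n i.rev) : ψ = matrixRep n :=
  PresentedMonoid.ext _ h

lemma matrixRep_kmk {n : ℕ} (w : FreeMonoid (Fin n)) :
    matrixRep n (kmk n w) = (w.toList.map fun i => Amat n i.rev).prod :=
  FreeMonoid.lift_apply _ w

lemma matrixRep_eX_univ (n : ℕ) : matrixRep n (eX Finset.univ) = 0 := by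
  rw [eX, matrixRep_kmk, FreeMonoid.toList_ofList, Fin.sort_univ, List.finRange_reverse,
    List.map_map]
  simpa [Function.comp_def, ← List.ofFn_eq_map] using prod_ofFn_Amat

end Kiselman

/-- Proposition 1: `aᵢ ↦ A_{n-i+1}` extends uniquely to a monoid homomorphism
`ψₙ : K_n → Matₙ(ℤ)`, and `ψₙ(e_{{1,…,n}}) = 0`. -/
theorem kiselman_representation (n : ℕ) :
    (∃! ψ : Kiselman n →* Matrix (Fin n) (Fin n) ℤ,
      ∀ i : Fin n, ψ (ka i) = Amat n i.rev) ∧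
    (∀ ψ : Kiselman n →* Matrix (Fin n) (Fin n) ℤ,
      (∀ i : Fin n, ψ (ka i) = Amat n i.rev) → ψ (eX Finset.univ) = 0) :=
  ⟨⟨Kiselman.matrixRep n, fun _ => rfl, fun _ => Kiselman.eq_matrixRep⟩,
    fun _ h => (Kiselman.eq_matrixRep h).symm ▸ Kiselman.matrixRep_eX_univ n⟩
end

section
/- The only monoid automorphism of the Kiselman semigroup K_n is the identity, and the map a_i ↦ a_{n−i+1} extends uniquely to an anti-automorphism of K_n, which is the unique anti-automorphism of K_n. -/
/-!
An automorphism permutes the indecomposable elements, and these are exactly the generators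
(the letters occurring in a product contain those of each factor). Since `aᵢaⱼaᵢ = aⱼaᵢ` holds
precisely when `i ≤ j`, the induced permutation of the indices is monotone, hence the identity.
Composing an anti-automorphism with the anti-automorphism `aᵢ ↦ a_{n-i+1}` yields an
automorphism, so the anti-automorphism is unique.
-/

open Function MulOpposite

-- Not `Irreducible`: in `K_n` a generator `a = a * a` is a product of two non-units.
def IsIndecomposable {M : Type*} [Monoid M] (x : M) : Prop :=
  x ≠ 1 ∧ ∀ u v, x = u * v → u = x ∨ v = x

namespace IsIndecomposable

variable {M N : Type*} [Monoid M] [Monoid N] {x : M}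

theorem map (e : M ≃* N) (hx : IsIndecomposable x) : IsIndecomposable (e x) := by
  refine ⟨fun h => hx.1 (e.injective (h.trans (map_one e).symm)), fun u v huv => ?_⟩
  have hx' : x = e.symm u * e.symm v := e.injective (by simpa using huv)
  rcases hx.2 _ _ hx' with hu | hv
  · exact .inl (by rw [← hu, e.apply_symm_apply])
  · exact .inr (by rw [← hv, e.apply_symm_apply])

theorem mem_of_closure_eq_top {S : Set M} (hS : Submonoid.closure S = ⊤)
    (hx : IsIndecomposable x) : x ∈ S := by
  have hx_mem : x ∈ Submonoid.closure S := hS ▸ Submonoid.mem_top x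
  induction hx_mem using Submonoid.closure_induction with
  | mem y hy => exact hy
  | one => exact absurd rfl hx.1
  | mul y z _ _ ihy ihz =>
    rcases hx.2 y z rfl with hy | hz
    · exact hy ▸ ihy (hy.symm ▸ hx)
    · exact hz ▸ ihz (hz.symm ▸ hx)

end IsIndecomposable

namespace Kiselman

variable {n : ℕ} {M : Type*} [Monoid M]

-- The relations `KisRel`, with `braid₂` rewritten to have left-hand side `aᵢaⱼaᵢ`.
structure IsKiselmanFamily (f : Fin n → M) : Prop where
  mul_self (i : Fin n) : f i * f i = f i
  of_lt {i j : Fin n} : i < j → f i * f j * f i = f j * f i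
  of_gt {i j : Fin n} : j < i → f i * f j * f i = f i * f j

theorem isKiselmanFamily_of_mul_self {M : Type*} [CommMonoid M] {f : Fin n → M}
    (hf : ∀ i, f i * f i = f i) : IsKiselmanFamily f where
  mul_self := hf
  of_lt _ := by rw [mul_right_comm, hf, mul_comm]
  of_gt _ := by rw [mul_right_comm, hf]

theorem isKiselmanFamily_ka : IsKiselmanFamily (ka (n := n)) where
  mul_self i := PresentedMonoid.mk_eq_mk_of_rel (KisRel.idem i)
  of_lt h := PresentedMonoid.mk_eq_mk_of_rel (KisRel.braid₁ h)
  of_gt h := PresentedMonoid.mk_eq_mk_of_rel (KisRel.braid₂ h)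

def lift (f : Fin n → M) (hf : IsKiselmanFamily f) : Kiselman n →* M :=
  PresentedMonoid.lift f <| by
    rintro _ _ (i | @⟨i, j, h⟩ | @⟨i, j, h⟩)
    · simpa using hf.mul_self i
    · simpa using hf.of_lt h
    · simpa using hf.of_gt h

theorem lift_ka (f : Fin n → M) (hf : IsKiselmanFamily f) (i : Fin n) :
    lift f hf (ka i) = f i :=
  rfl

@[elab_as_elim]
theorem induction_on {P : Kiselman n → Prop} (x : Kiselman n) (one : P 1)
    (ka : ∀ i, P (ka i)) (mul : ∀ x y, P x → P y → P (x * y)) : P x := by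
  have hx : x ∈ Submonoid.closure (Set.range (PresentedMonoid.of (KisRel n))) :=
    PresentedMonoid.closure_range_of _ ▸ Submonoid.mem_top x
  induction hx using Submonoid.closure_induction with
  | mem y hy => obtain ⟨i, rfl⟩ := hy; exact ka i
  | one => exact one
  | mul y z _ _ hy hz => exact mul y z hy hz

def FinsetUnion (α : Type*) := Finset α

instance {α : Type*} [DecidableEq α] : CommMonoid (FinsetUnion α) where
  mul s t := (s ∪ t : Finset α)
  one := (∅ : Finset α)
  mul_assoc := Finset.union_assoc
  one_mul := Finset.empty_union
  mul_one := Finset.union_empty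
  mul_comm := Finset.union_comm

def contentHom : Kiselman n →* FinsetUnion (Fin n) :=
  lift (fun i => ({i} : Finset (Fin n))) (isKiselmanFamily_of_mul_self fun _ => Finset.union_self _)

def content (x : Kiselman n) : Finset (Fin n) := contentHom x

theorem content_mul (x y : Kiselman n) : content (x * y) = content x ∪ content y :=
  map_mul contentHom x y

theorem content_ka (i : Fin n) : content (ka i) = {i} := rfl

theorem eq_one_or_eq_ka_of_content_subset {x : Kiselman n} {i : Fin n}
    (hx : content x ⊆ {i}) : x = 1 ∨ x = ka i := by
  induction x using induction_on with
  | one => exact .inl rfl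
  | ka j => exact .inr (by rw [Finset.singleton_subset_singleton.1 hx])
  | mul x y ihx ihy =>
    rw [content_mul, Finset.union_subset_iff] at hx
    rcases ihx hx.1 with rfl | rfl <;> rcases ihy hx.2 with rfl | rfl <;>
      simp [isKiselmanFamily_ka.mul_self]

theorem ka_injective : Injective (ka : Fin n → Kiselman n) := fun _ _ h =>
  Finset.singleton_injective (congrArg content h)

theorem isIndecomposable_ka (i : Fin n) : IsIndecomposable (ka i) := by
  refine ⟨fun h => Finset.singleton_ne_empty i (congrArg content h), fun u v huv => ?_⟩
  have hcontent := congrArg content huv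
  rw [content_mul, content_ka] at hcontent
  rcases eq_one_or_eq_ka_of_content_subset (hcontent ▸ Finset.subset_union_left) with rfl | hu
  · exact .inr (by rw [huv, one_mul])
  · exact .inl hu

theorem exists_ka_eq_of_isIndecomposable {x : Kiselman n} (hx : IsIndecomposable x) :
    ∃ i, ka i = x :=
  hx.mem_of_closure_eq_top (S := Set.range ka) (PresentedMonoid.closure_range_of _)

-- Idempotents `f`, `g` with `fgf = gfg = gf ≠ fg`.
def endLow : Function.End (Fin 3) := ![0, 0, 2]
def endHigh : Function.End (Fin 3) := ![2, 1, 2]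

def splitRep (p : Fin n) : Kiselman n →* Function.End (Fin 3) :=
  lift (fun i => if i ≤ p then endLow else endHigh) <| by
    refine ⟨fun i => ?_, fun {i j} hij => ?_, fun {i j} hji => ?_⟩ <;>
      split_ifs <;> first | (funext x; fin_cases x <;> rfl) | omega

theorem ka_mul_ka_ne_ka_mul_ka {i j : Fin n} (hij : i < j) : ka i * ka j ≠ ka j * ka i := by
  intro h
  have h1 := congrFun (congrArg (splitRep i) h) 1
  simp only [map_mul, splitRep, lift_ka, le_refl, not_le.2 hij, if_true, if_false] at h1
  exact absurd h1 (by decide)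

theorem ka_mul_ka_mul_ka_eq_iff {i j : Fin n} : ka i * ka j * ka i = ka j * ka i ↔ i ≤ j := by
  rcases lt_trichotomy i j with hij | rfl | hji
  · exact iff_of_true (isKiselmanFamily_ka.of_lt hij) hij.le
  · simp only [isKiselmanFamily_ka.mul_self, le_refl]
  · rw [isKiselmanFamily_ka.of_gt hji]
    exact iff_of_false (ka_mul_ka_ne_ka_mul_ka hji).symm hji.not_ge

theorem mulEquiv_eq_refl (σ : Kiselman n ≃* Kiselman n) : σ = MulEquiv.refl _ := by
  choose π hπ using fun i => exists_ka_eq_of_isIndecomposable ((isIndecomposable_ka i).map σ)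
  have hπ_mono : Monotone π := fun i j hij => by
    have h := congrArg σ (ka_mul_ka_mul_ka_eq_iff.2 hij)
    simp only [map_mul, ← hπ] at h
    exact ka_mul_ka_mul_ka_eq_iff.1 h
  have hπ_inj : Injective π := fun i j h =>
    ka_injective (σ.injective (by rw [← hπ, ← hπ, h]))
  apply MulEquiv.toMonoidHom_injective
  refine PresentedMonoid.ext _ fun i => ?_
  change σ (ka i) = ka i
  rw [← hπ, (hπ_mono.strictMono_of_injective hπ_inj).apply_eq]

def reverseHom : Kiselman n →* (Kiselman n)ᵐᵒᵖ :=
  lift (fun i => op (ka i.rev)) <| by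
    refine ⟨fun i => ?_, fun {i j} hij => ?_, fun {i j} hji => ?_⟩ <;>
      simp only [← op_mul, ← mul_assoc, op_inj]
    · exact isKiselmanFamily_ka.mul_self _
    · exact isKiselmanFamily_ka.of_gt (Fin.rev_lt_rev.2 hij)
    · exact isKiselmanFamily_ka.of_lt (Fin.rev_lt_rev.2 hji)

def reverse (x : Kiselman n) : Kiselman n := (reverseHom x).unop

theorem reverse_ka (i : Fin n) : reverse (ka i) = ka i.rev := rfl

theorem reverse_mul (x y : Kiselman n) : reverse (x * y) = reverse y * reverse x := by
  simp only [reverse, map_mul, unop_mul]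

theorem reverse_reverse (x : Kiselman n) : reverse (reverse x) = x := by
  induction x using induction_on with
  | one => simp only [reverse, map_one, unop_one]
  | ka i => rw [reverse_ka, reverse_ka, Fin.rev_rev]
  | mul x y hx hy => rw [reverse_mul, reverse_mul, hx, hy]

theorem reverse_bijective : Bijective (reverse : Kiselman n → Kiselman n) :=
  Involutive.bijective reverse_reverse

theorem eq_reverse_of_bijective {τ : Kiselman n → Kiselman n} (hτ : Bijective τ)
    (hτ_mul : ∀ x y, τ (x * y) = τ y * τ x) : τ = reverse := by
  let σ : Kiselman n ≃* Kiselman n := MulEquiv.ofBijective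
    (⟨reverse ∘ τ, fun x y => by simp only [comp_apply, hτ_mul, reverse_mul]⟩ :
      Kiselman n →ₙ* Kiselman n) (reverse_bijective.comp hτ)
  funext x
  calc τ x = reverse (σ x) := (reverse_reverse _).symm
    _ = reverse x := by rw [mulEquiv_eq_refl σ, MulEquiv.refl_apply]

end Kiselman

/-- Proposition 3: the only automorphism of `K_n` is the identity; `K_n` has a unique
anti-automorphism, and it sends `aᵢ` to `a_{n-i+1}`. -/
theorem kiselman_automorphisms (n : ℕ) :
    (∀ σ : Kiselman n ≃* Kiselman n, ∀ x : Kiselman n, σ x = x) ∧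
    (∃! τ : Kiselman n → Kiselman n,
      Function.Bijective τ ∧ ∀ x y : Kiselman n, τ (x * y) = τ y * τ x) ∧
    (∀ τ : Kiselman n → Kiselman n, Function.Bijective τ →
      (∀ x y : Kiselman n, τ (x * y) = τ y * τ x) →
      ∀ i : Fin n, τ (ka i) = ka i.rev) := by
  refine ⟨fun σ x => by rw [Kiselman.mulEquiv_eq_refl σ, MulEquiv.refl_apply], ?_, ?_⟩
  · exact ⟨Kiselman.reverse, ⟨Kiselman.reverse_bijective, Kiselman.reverse_mul⟩,
      fun τ hτ => Kiselman.eq_reverse_of_bijective hτ.1 hτ.2⟩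
  · intro τ hτ hτ_mul i
    rw [Kiselman.eq_reverse_of_bijective hτ hτ_mul, Kiselman.reverse_ka]
end
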